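/- Under the assumptions of the rough convolution lemma (α ∈ (1/3,1/2), 0 ≤ σ < α, α-Hölder rough path 𝐗, monotone family of interpolation spaces, semigroup bounds |(S(t)−Id)x|_η ≲ t^σ'|x|_{η+σ'} and |S(t)x|_{η+σ'} ≲ t^{−σ'}|x|_η for σ' ∈ [0,1]), for (y, y') ∈ D^{2α}_{X,γ} the path z_t := ∫₀ᵗ S(t−s) y_s d𝐗_s satisfies the supremum bound ‖z‖_{∞, B_{γ+σ}} ≲ T^{α−σ} ‖y, y'‖_{X,2α,γ}; in particular, for every t ∈ (0,T], |z_t|_{B_{γ+σ}} ≲ t^{α−σ}(|y₀|_{B_γ} + |y'₀|_{B_{γ−α}} + ‖y,y'‖_{X,2α,γ}). -/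

import Mathlib

open Set

/-- A monotone family of interpolation spaces: a scale `(B_θ)_{θ ∈ ℝ}` of separable Banach
spaces realised inside a common ambient real vector space `E`; `Mem θ x` means `x ∈ B_θ`,
`N θ x` denotes the norm `|x|_θ`.  For `β₁ ≤ β₂` the space `B_{β₂}` is contained in `B_{β₁}`
with dense and continuous embedding, and the interpolation inequality holds. -/
structure BanachScale where
  E : Type
  [inst_add : AddCommGroup E]
  [inst_mod : Module ℝ E]
  Mem : ℝ → E → Prop
  N : ℝ → E → ℝ
  mem_zero : ∀ θ : ℝ, Mem θ 0
  mem_add : ∀ (θ : ℝ) (x y : E), Mem θ x → Mem θ y → Mem θ (x + y)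
  mem_neg : ∀ (θ : ℝ) (x : E), Mem θ x → Mem θ (-x)
  mem_smul : ∀ (θ c : ℝ) (x : E), Mem θ x → Mem θ (c • x)
  N_nonneg : ∀ (θ : ℝ) (x : E), 0 ≤ N θ x
  N_zero : ∀ θ : ℝ, N θ 0 = 0
  N_eq_zero : ∀ (θ : ℝ) (x : E), Mem θ x → N θ x = 0 → x = 0
  N_add : ∀ (θ : ℝ) (x y : E), Mem θ x → Mem θ y → N θ (x + y) ≤ N θ x + N θ y
  N_smul : ∀ (θ c : ℝ) (x : E), N θ (c • x) = |c| * N θ x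
  mem_mono : ∀ ⦃β₁ β₂ : ℝ⦄, β₁ ≤ β₂ → ∀ x : E, Mem β₂ x → Mem β₁ x
  embed_bound : ∀ ⦃β₁ β₂ : ℝ⦄, β₁ ≤ β₂ → ∃ C > (0:ℝ), ∀ x : E, Mem β₂ x → N β₁ x ≤ C * N β₂ x
  embed_dense : ∀ ⦃β₁ β₂ : ℝ⦄, β₁ ≤ β₂ → ∀ x : E, Mem β₁ x → ∀ ε > (0:ℝ),
    ∃ y : E, Mem β₂ y ∧ N β₁ (x - y) < ε
  complete : ∀ (θ : ℝ) (u : ℕ → E), (∀ n, Mem θ (u n)) →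
    (∀ ε > (0:ℝ), ∃ M : ℕ, ∀ m ≥ M, ∀ n ≥ M, N θ (u m - u n) < ε) →
    ∃ x : E, Mem θ x ∧ ∀ ε > (0:ℝ), ∃ M : ℕ, ∀ n ≥ M, N θ (u n - x) < ε
  separable : ∀ θ : ℝ, ∃ D : Set E, D.Countable ∧ (∀ x ∈ D, Mem θ x) ∧
    ∀ x : E, Mem θ x → ∀ ε > (0:ℝ), ∃ y ∈ D, N θ (x - y) < ε
  interp : ∀ ⦃θ β γ : ℝ⦄, θ ≤ β → β ≤ γ → ∃ C > (0:ℝ), ∀ x : E, Mem γ x →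
    N β x ^ (γ - θ) ≤ C * (N θ x ^ (γ - β) * N γ x ^ (β - θ))

attribute [instance] BanachScale.inst_add BanachScale.inst_mod

/-- An analytic `C₀`-semigroup `(S(t))_{t ≥ 0}` acting on a scale of Banach spaces,
together with the standard parabolic bounds
`|(S(t) - Id)x|_η ≲ t^σ |x|_{η+σ}` and `|S(t)x|_{η+σ} ≲ t^{-σ} |x|_η` for `σ ∈ [0,1]`,
with constants uniform on compact time intervals. -/
structure ScaleSemigroup (𝓑 : BanachScale) where
  S : ℝ → 𝓑.E →ₗ[ℝ] 𝓑.E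
  S_id : ∀ x : 𝓑.E, S 0 x = x
  S_comp : ∀ s t : ℝ, 0 ≤ s → 0 ≤ t → ∀ x : 𝓑.E, S (s + t) x = S s (S t x)
  S_mem : ∀ (t θ : ℝ) (x : 𝓑.E), 0 ≤ t → 𝓑.Mem θ x → 𝓑.Mem θ (S t x)
  S_bounded : ∀ θ Tm : ℝ, 0 < Tm → ∃ C > (0:ℝ), ∀ (t : ℝ) (x : 𝓑.E), 0 ≤ t → t ≤ Tm →
    𝓑.Mem θ x → 𝓑.N θ (S t x) ≤ C * 𝓑.N θ x
  S_strong_cont : ∀ (θ : ℝ) (x : 𝓑.E), 𝓑.Mem θ x → ∀ ε > (0:ℝ), ∃ δ > (0:ℝ),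
    ∀ t : ℝ, 0 < t → t < δ → 𝓑.N θ (S t x - x) < ε
  S_smoothing : ∀ η σ Tm : ℝ, 0 ≤ σ → σ ≤ 1 → 0 < Tm → ∃ C > (0:ℝ),
    ∀ (t : ℝ) (x : 𝓑.E), 0 < t → t ≤ Tm → 𝓑.Mem η x →
      𝓑.Mem (η + σ) (S t x) ∧ 𝓑.N (η + σ) (S t x) ≤ C * t ^ (-σ) * 𝓑.N η x
  S_holdId : ∀ η σ Tm : ℝ, 0 ≤ σ → σ ≤ 1 → 0 < Tm → ∃ C > (0:ℝ),
    ∀ (t : ℝ) (x : 𝓑.E), 0 < t → t ≤ Tm → 𝓑.Mem (η + σ) x →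
      𝓑.N η (S t x - x) ≤ C * t ^ σ * 𝓑.N (η + σ) x

/-- A (one-dimensional) `α`-Hölder rough path `𝐗 = (X, X⁽²⁾)` on `[0,T]`:
`X ∈ C^α`, `X₀ = 0`, `X⁽²⁾ ∈ C^{2α}` on the simplex, satisfying Chen's relation. -/
structure RoughPath (α T : ℝ) where
  X : ℝ → ℝ
  X2 : ℝ → ℝ → ℝ
  X_zero : X 0 = 0
  holderX : ∃ C : ℝ, ∀ s t : ℝ, 0 ≤ s → s ≤ t → t ≤ T → |X t - X s| ≤ C * (t - s) ^ α
  holderX2 : ∃ C : ℝ, ∀ s t : ℝ, 0 ≤ s → s ≤ t → t ≤ T → |X2 s t| ≤ C * (t - s) ^ (2 * α)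
  chen : ∀ s u t : ℝ, 0 ≤ s → s ≤ u → u ≤ t → t ≤ T →
    X2 s t - X2 s u - X2 u t = (X u - X s) * (X t - X u)

/-- The supremum norm `‖f‖_{∞, B_θ}` over `[0,T]`. -/
noncomputable def scaleSupNorm (𝓑 : BanachScale) (θ T : ℝ) (f : ℝ → 𝓑.E) : ℝ :=
  sSup {r : ℝ | ∃ t : ℝ, 0 ≤ t ∧ t ≤ T ∧ r = 𝓑.N θ (f t)}

/-- The `η`-Hölder seminorm (in `B_θ`) of a two-parameter function on `[0,T]`. -/
noncomputable def scaleHolderNorm2 (𝓑 : BanachScale) (θ η T : ℝ) (F : ℝ → ℝ → 𝓑.E) : ℝ :=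
  sSup {r : ℝ | ∃ s t : ℝ, 0 ≤ s ∧ s < t ∧ t ≤ T ∧ r = 𝓑.N θ (F s t) / (t - s) ^ η}

/-- The `η`-Hölder seminorm `‖f‖_{η, B_θ}` over `[0,T]`. -/
noncomputable def scaleHolderNorm (𝓑 : BanachScale) (θ η T : ℝ) (f : ℝ → 𝓑.E) : ℝ :=
  scaleHolderNorm2 𝓑 θ η T fun s t => f t - f s

/-- The `η`-Hölder seminorm of a real-valued path on `[0,T]`. -/
noncomputable def realHolderNorm (η T : ℝ) (X : ℝ → ℝ) : ℝ :=
  sSup {r : ℝ | ∃ s t : ℝ, 0 ≤ s ∧ s < t ∧ t ≤ T ∧ r = |X t - X s| / (t - s) ^ η}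

/-- `f : [0,T] → B_θ` is `η`-Hölder continuous. -/
def IsHolderOn (𝓑 : BanachScale) (θ η T : ℝ) (f : ℝ → 𝓑.E) : Prop :=
  ∃ C : ℝ, ∀ s t : ℝ, 0 ≤ s → s ≤ t → t ≤ T → 𝓑.N θ (f t - f s) ≤ C * (t - s) ^ η

/-- The remainder `R^y_{s,t} = y_t - y_s - y'_s X_{s,t}` of a controlled rough path. -/
def gubRemainder (𝓑 : BanachScale) (X : ℝ → ℝ) (y y' : ℝ → 𝓑.E) (s t : ℝ) : 𝓑.E :=
  y t - y s - (X t - X s) • y' s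

/-- `(y, y')` is a controlled rough path in `D^{2α}_{X,γ}([0,T])`:
`y ∈ C([0,T]; B_γ)`, `y' ∈ C([0,T]; B_{γ-α}) ∩ C^α([0,T]; B_{γ-2α})` and the remainder
`R^y ∈ C^α([0,T]; B_{γ-α}) ∩ C^{2α}([0,T]; B_{γ-2α})`. -/
structure IsControlledPath (𝓑 : BanachScale) (α γ T : ℝ) (X : ℝ → ℝ)
    (y y' : ℝ → 𝓑.E) : Prop where
  mem_y : ∀ t : ℝ, 0 ≤ t → t ≤ T → 𝓑.Mem γ (y t)
  mem_y' : ∀ t : ℝ, 0 ≤ t → t ≤ T → 𝓑.Mem (γ - α) (y' t)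
  cont_y : ∀ t : ℝ, 0 ≤ t → t ≤ T → ∀ ε > (0:ℝ), ∃ δ > (0:ℝ), ∀ s : ℝ, 0 ≤ s → s ≤ T →
    |s - t| < δ → 𝓑.N γ (y s - y t) < ε
  cont_y' : ∀ t : ℝ, 0 ≤ t → t ≤ T → ∀ ε > (0:ℝ), ∃ δ > (0:ℝ), ∀ s : ℝ, 0 ≤ s → s ≤ T →
    |s - t| < δ → 𝓑.N (γ - α) (y' s - y' t) < ε
  holder_y' : ∃ C : ℝ, ∀ s t : ℝ, 0 ≤ s → s ≤ t → t ≤ T →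
    𝓑.N (γ - 2 * α) (y' t - y' s) ≤ C * (t - s) ^ α
  rem_alpha : ∃ C : ℝ, ∀ s t : ℝ, 0 ≤ s → s ≤ t → t ≤ T →
    𝓑.N (γ - α) (gubRemainder 𝓑 X y y' s t) ≤ C * (t - s) ^ α
  rem_two_alpha : ∃ C : ℝ, ∀ s t : ℝ, 0 ≤ s → s ≤ t → t ≤ T →
    𝓑.N (γ - 2 * α) (gubRemainder 𝓑 X y y' s t) ≤ C * (t - s) ^ (2 * α)

/-- The norm `‖(y,y')‖_{X,2α,γ}` on `D^{2α}_{X,γ}([0,T])`. -/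
noncomputable def crpNorm (𝓑 : BanachScale) (α γ T : ℝ) (X : ℝ → ℝ)
    (y y' : ℝ → 𝓑.E) : ℝ :=
  scaleSupNorm 𝓑 γ T y + scaleSupNorm 𝓑 (γ - α) T y'
    + scaleHolderNorm 𝓑 (γ - 2 * α) α T y'
    + scaleHolderNorm2 𝓑 (γ - α) α T (gubRemainder 𝓑 X y y')
    + scaleHolderNorm2 𝓑 (γ - 2 * α) (2 * α) T (gubRemainder 𝓑 X y y')

/-- A partition `a = t_0 < t_1 < ⋯ < t_n = b` of the interval `[a,b]`. -/
structure RPartition (a b : ℝ) where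
  n : ℕ
  t : ℕ → ℝ
  n_pos : 0 < n
  strict : ∀ i : ℕ, i < n → t i < t (i + 1)
  first : t 0 = a
  last : t n = b

/-- The mesh `|π|` of a partition. -/
noncomputable def RPartition.mesh {a b : ℝ} (π : RPartition a b) : ℝ :=
  sSup {r : ℝ | ∃ i : ℕ, i < π.n ∧ r = π.t (i + 1) - π.t i}

/-- The compensated Riemann sum `Σ_{[u,v] ∈ π} S(b - u)[y_u X_{u,v} + y'_u X⁽²⁾_{u,v}]`. -/
noncomputable def convRiemannSum (𝓑 : BanachScale) (Sg : ScaleSemigroup 𝓑)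
    (X : ℝ → ℝ) (X2 : ℝ → ℝ → ℝ) (y y' : ℝ → 𝓑.E) {a b : ℝ} (π : RPartition a b) : 𝓑.E :=
  ∑ i ∈ Finset.range π.n,
    Sg.S (b - π.t i)
      ((X (π.t (i + 1)) - X (π.t i)) • y (π.t i) + X2 (π.t i) (π.t (i + 1)) • y' (π.t i))

/-- `I` is the rough convolution `∫_a^b S(b-r) y_r d𝐗_r`, i.e. the limit in `B_θ` of the
compensated Riemann sums over partitions of `[a,b]` with vanishing mesh. -/
def IsRoughConvolution (𝓑 : BanachScale) (Sg : ScaleSemigroup 𝓑) (X : ℝ → ℝ)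
    (X2 : ℝ → ℝ → ℝ) (y y' : ℝ → 𝓑.E) (θ a b : ℝ) (I : 𝓑.E) : Prop :=
  𝓑.Mem θ I ∧ ∀ ε > (0:ℝ), ∃ δ > (0:ℝ), ∀ π : RPartition a b, π.mesh < δ →
    𝓑.N θ (convRiemannSum 𝓑 Sg X X2 y y' π - I) ≤ ε

/-- Left Riemann sum of a `B`-valued function. -/
noncomputable def intRiemannSum (𝓑 : BanachScale) (f : ℝ → 𝓑.E) {a b : ℝ}
    (π : RPartition a b) : 𝓑.E :=
  ∑ i ∈ Finset.range π.n, (π.t (i + 1) - π.t i) • f (π.t i)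

/-- `I = ∫_a^b f(s) ds` as a `B_θ`-valued Riemann integral. -/
def IsRiemannIntegral (𝓑 : BanachScale) (θ : ℝ) (f : ℝ → 𝓑.E) (a b : ℝ) (I : 𝓑.E) : Prop :=
  𝓑.Mem θ I ∧ ∀ ε > (0:ℝ), ∃ δ > (0:ℝ), ∀ π : RPartition a b, π.mesh < δ →
    𝓑.N θ (intRiemannSum 𝓑 f π - I) ≤ ε

/-- Assumption (F): the drift `F : B_γ → B_{γ-δ}` is locally Lipschitz continuous and
satisfies a linear growth condition. -/
structure AssumptionF (𝓑 : BanachScale) (γ δ : ℝ) (F : 𝓑.E → 𝓑.E) : Prop where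
  maps : ∀ x : 𝓑.E, 𝓑.Mem γ x → 𝓑.Mem (γ - δ) (F x)
  locLip : ∀ R > (0:ℝ), ∃ L : ℝ, ∀ x y : 𝓑.E, 𝓑.Mem γ x → 𝓑.Mem γ y →
    𝓑.N γ x ≤ R → 𝓑.N γ y ≤ R → 𝓑.N (γ - δ) (F x - F y) ≤ L * 𝓑.N γ (x - y)
  linGrowth : ∃ C : ℝ, ∀ x : 𝓑.E, 𝓑.Mem γ x → 𝓑.N (γ - δ) (F x) ≤ C * (1 + 𝓑.N γ x)

/-- Assumption (G): for `θ ∈ {0, α, 2α}` the diffusion coefficient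
`G : B_{γ-θ} → B_{γ-θ-σ}` is three times continuously (Fréchet) differentiable with bounded
derivatives `DG`, `D²G`, `D³G`, and the derivative of `x ↦ DG(x)G(x) : B_{γ-α} → B_{γ-2α-σ}`
is bounded. -/
structure AssumptionG (𝓑 : BanachScale) (α σ γ : ℝ) (G : 𝓑.E → 𝓑.E)
    (DG : 𝓑.E → 𝓑.E →ₗ[ℝ] 𝓑.E)
    (D2G : 𝓑.E → 𝓑.E →ₗ[ℝ] 𝓑.E →ₗ[ℝ] 𝓑.E)
    (D3G : 𝓑.E → 𝓑.E →ₗ[ℝ] 𝓑.E →ₗ[ℝ] 𝓑.E →ₗ[ℝ] 𝓑.E) : Prop where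
  maps : ∀ θ ∈ ({0, α, 2 * α} : Set ℝ), ∀ x : 𝓑.E, 𝓑.Mem (γ - θ) x → 𝓑.Mem (γ - θ - σ) (G x)
  DG_maps : ∀ θ ∈ ({0, α, 2 * α} : Set ℝ), ∀ x h : 𝓑.E, 𝓑.Mem (γ - θ) x → 𝓑.Mem (γ - θ) h →
    𝓑.Mem (γ - θ - σ) (DG x h)
  DG_bound : ∀ θ ∈ ({0, α, 2 * α} : Set ℝ), ∃ C : ℝ, ∀ x h : 𝓑.E, 𝓑.Mem (γ - θ) x →
    𝓑.Mem (γ - θ) h → 𝓑.N (γ - θ - σ) (DG x h) ≤ C * 𝓑.N (γ - θ) h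
  DG_isDeriv : ∀ θ ∈ ({0, α, 2 * α} : Set ℝ), ∀ x : 𝓑.E, 𝓑.Mem (γ - θ) x → ∀ ε > (0:ℝ),
    ∃ δ > (0:ℝ), ∀ h : 𝓑.E, 𝓑.Mem (γ - θ) h → 𝓑.N (γ - θ) h < δ →
      𝓑.N (γ - θ - σ) (G (x + h) - G x - DG x h) ≤ ε * 𝓑.N (γ - θ) h
  D2G_maps : ∀ θ ∈ ({0, α, 2 * α} : Set ℝ), ∀ x h k : 𝓑.E, 𝓑.Mem (γ - θ) x →
    𝓑.Mem (γ - θ) h → 𝓑.Mem (γ - θ) k → 𝓑.Mem (γ - θ - σ) (D2G x h k)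
  D2G_bound : ∀ θ ∈ ({0, α, 2 * α} : Set ℝ), ∃ C : ℝ, ∀ x h k : 𝓑.E, 𝓑.Mem (γ - θ) x →
    𝓑.Mem (γ - θ) h → 𝓑.Mem (γ - θ) k →
    𝓑.N (γ - θ - σ) (D2G x h k) ≤ C * (𝓑.N (γ - θ) h * 𝓑.N (γ - θ) k)
  D2G_isDeriv : ∀ θ ∈ ({0, α, 2 * α} : Set ℝ), ∀ x : 𝓑.E, 𝓑.Mem (γ - θ) x → ∀ ε > (0:ℝ),
    ∃ δ > (0:ℝ), ∀ h : 𝓑.E, 𝓑.Mem (γ - θ) h → 𝓑.N (γ - θ) h < δ → ∀ k : 𝓑.E,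
      𝓑.Mem (γ - θ) k →
      𝓑.N (γ - θ - σ) (DG (x + h) k - DG x k - D2G x h k) ≤ ε * (𝓑.N (γ - θ) h * 𝓑.N (γ - θ) k)
  D3G_maps : ∀ θ ∈ ({0, α, 2 * α} : Set ℝ), ∀ x h k l : 𝓑.E, 𝓑.Mem (γ - θ) x →
    𝓑.Mem (γ - θ) h → 𝓑.Mem (γ - θ) k → 𝓑.Mem (γ - θ) l → 𝓑.Mem (γ - θ - σ) (D3G x h k l)
  D3G_bound : ∀ θ ∈ ({0, α, 2 * α} : Set ℝ), ∃ C : ℝ, ∀ x h k l : 𝓑.E, 𝓑.Mem (γ - θ) x →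
    𝓑.Mem (γ - θ) h → 𝓑.Mem (γ - θ) k → 𝓑.Mem (γ - θ) l →
    𝓑.N (γ - θ - σ) (D3G x h k l) ≤ C * (𝓑.N (γ - θ) h * (𝓑.N (γ - θ) k * 𝓑.N (γ - θ) l))
  D3G_isDeriv : ∀ θ ∈ ({0, α, 2 * α} : Set ℝ), ∀ x : 𝓑.E, 𝓑.Mem (γ - θ) x → ∀ ε > (0:ℝ),
    ∃ δ > (0:ℝ), ∀ h : 𝓑.E, 𝓑.Mem (γ - θ) h → 𝓑.N (γ - θ) h < δ → ∀ k l : 𝓑.E,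
      𝓑.Mem (γ - θ) k → 𝓑.Mem (γ - θ) l →
      𝓑.N (γ - θ - σ) (D2G (x + h) k l - D2G x k l - D3G x h k l)
        ≤ ε * (𝓑.N (γ - θ) h * (𝓑.N (γ - θ) k * 𝓑.N (γ - θ) l))
  D3G_cont : ∀ θ ∈ ({0, α, 2 * α} : Set ℝ), ∀ x : 𝓑.E, 𝓑.Mem (γ - θ) x → ∀ ε > (0:ℝ),
    ∃ δ > (0:ℝ), ∀ x' : 𝓑.E, 𝓑.Mem (γ - θ) x' → 𝓑.N (γ - θ) (x' - x) < δ →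
      ∀ h k l : 𝓑.E, 𝓑.Mem (γ - θ) h → 𝓑.Mem (γ - θ) k → 𝓑.Mem (γ - θ) l →
      𝓑.N (γ - θ - σ) (D3G x' h k l - D3G x h k l)
        ≤ ε * (𝓑.N (γ - θ) h * (𝓑.N (γ - θ) k * 𝓑.N (γ - θ) l))
  DGG_deriv_bounded : ∃ (L : 𝓑.E → 𝓑.E →ₗ[ℝ] 𝓑.E) (C : ℝ),
    (∀ x h : 𝓑.E, 𝓑.Mem (γ - α) x → 𝓑.Mem (γ - α) h →
      𝓑.Mem (γ - 2 * α - σ) (L x h) ∧ 𝓑.N (γ - 2 * α - σ) (L x h) ≤ C * 𝓑.N (γ - α) h) ∧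
    ∀ x : 𝓑.E, 𝓑.Mem (γ - α) x → ∀ ε > (0:ℝ), ∃ δ > (0:ℝ), ∀ h : 𝓑.E, 𝓑.Mem (γ - α) h →
      𝓑.N (γ - α) h < δ →
      𝓑.N (γ - 2 * α - σ) (DG (x + h) (G (x + h)) - DG x (G x) - L x h) ≤ ε * 𝓑.N (γ - α) h

/-- `y` is a (mild) solution on `[0,T']` of the rough evolution equation
`dy = (Ay + F(y))dt + G(y)d𝐗`, `y(0) = y₀`: the pair `(y, G(y))` is a controlled rough
path in `D^{2α}_{X,γ}([0,T'])` and the mild formulation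
`y_t = S(t)y₀ + ∫₀ᵗ S(t-s)F(y_s)ds + ∫₀ᵗ S(t-s)G(y_s)d𝐗_s` holds, the rough convolution
being the limit of the compensated Riemann sums
`Σ S(t-u)[G(y_u)X_{u,v} + DG(y_u)G(y_u)X⁽²⁾_{u,v}]`. -/
structure IsSolution (𝓑 : BanachScale) (Sg : ScaleSemigroup 𝓑) (α γ : ℝ)
    (X : ℝ → ℝ) (X2 : ℝ → ℝ → ℝ) (F G : 𝓑.E → 𝓑.E) (DG : 𝓑.E → 𝓑.E →ₗ[ℝ] 𝓑.E)
    (y₀ : 𝓑.E) (T' : ℝ) (y : ℝ → 𝓑.E) : Prop where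
  controlled : IsControlledPath 𝓑 α γ T' X y fun t => G (y t)
  init : y 0 = y₀
  mild : ∀ t : ℝ, 0 < t → t ≤ T' → ∃ D Z : 𝓑.E,
    IsRiemannIntegral 𝓑 γ (fun s => Sg.S (t - s) (F (y s))) 0 t D ∧
    IsRoughConvolution 𝓑 Sg X X2 (fun s => G (y s)) (fun s => DG (y s) (G (y s)))
      (γ - 2 * α) 0 t Z ∧
    y t = Sg.S t y₀ + D + Z

/-- The Borel σ-algebra of `B_θ`, generated by the `|·|_θ`-balls of `B_θ`,
as a σ-algebra on the ambient space. -/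
def scaleBorel (𝓑 : BanachScale) (θ : ℝ) : MeasurableSpace 𝓑.E :=
  MeasurableSpace.generateFrom
    {s : Set 𝓑.E | ∃ (c : 𝓑.E) (r : ℝ), s = {x | 𝓑.Mem θ x ∧ 𝓑.N θ (x - c) < r}}

open Set

section helpers

lemma sum_range_double {M : Type*} [AddCommMonoid M] (f : ℕ → M) (n : ℕ) :
    ∑ i ∈ Finset.range (2*n), f i = ∑ i ∈ Finset.range n, (f (2*i) + f (2*i+1)) := by
  induction n with
  | zero => simp
  | succ n ih =>
    rw [Finset.sum_range_succ, ← ih, show 2*(n+1) = (2*n+1)+1 from by ring,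
      Finset.sum_range_succ, Finset.sum_range_succ, add_assoc]

lemma rpow_base_antitone {a b θ : ℝ} (ha : 0 < a) (hab : a ≤ b) (hθ : 0 ≤ θ) :
    b ^ (-θ) ≤ a ^ (-θ) := by
  rw [Real.rpow_neg (by linarith), Real.rpow_neg ha.le]
  exact inv_anti₀ (Real.rpow_pos_of_pos ha θ) (Real.rpow_le_rpow ha.le hab hθ)

lemma sum_odd_pow_bound {θ : ℝ} (h0 : 0 ≤ θ) (h1 : θ < 1) (n : ℕ) :
    ∑ j ∈ Finset.range n, (2*(j:ℝ)+1) ^ (-θ) ≤ (n:ℝ) ^ (1-θ) / (1-θ) := by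
  induction n with
  | zero => simp [Real.zero_rpow (by linarith : 1-θ ≠ 0)]
  | succ n ih =>
    rw [Finset.sum_range_succ]
    have hp0 : (0:ℝ) < 1 - θ := by linarith
    have hn1 : (0:ℝ) < (n:ℝ) + 1 := by positivity
    -- key : (1-θ) * (n+1)^(-θ) ≤ (n+1)^(1-θ) - n^(1-θ)
    have hx0 : (0:ℝ) ≤ (n:ℝ)/((n:ℝ)+1) := by positivity
    have bern : ((n:ℝ)/((n:ℝ)+1)) ^ (1-θ) ≤ 1 + (1-θ) * ((n:ℝ)/((n:ℝ)+1) - 1) := by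
      have := rpow_one_add_le_one_add_mul_self
        (s := (n:ℝ)/((n:ℝ)+1) - 1) (p := 1-θ) (by linarith) (by linarith) (by linarith)
      rwa [show (1:ℝ) + ((n:ℝ)/((n:ℝ)+1) - 1) = (n:ℝ)/((n:ℝ)+1) from by ring] at this
    have hsplit : ((n:ℝ)) ^ (1-θ) = ((n:ℝ)+1) ^ (1-θ) * ((n:ℝ)/((n:ℝ)+1)) ^ (1-θ) := by
      rw [← Real.mul_rpow (by positivity) hx0]
      congr 1
      field_simp
    have hfrac : (n:ℝ)/((n:ℝ)+1) - 1 = -(1/((n:ℝ)+1)) := by field_simp; ring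
    have hpow1 : ((n:ℝ)+1) ^ (-θ) = ((n:ℝ)+1) ^ (1-θ) / ((n:ℝ)+1) := by
      rw [show -θ = (1-θ) - 1 from by ring, Real.rpow_sub hn1, Real.rpow_one]
    have hposp : (0:ℝ) < ((n:ℝ)+1) ^ (1-θ) := Real.rpow_pos_of_pos hn1 _
    have key : (1-θ) * (((n:ℝ)+1)) ^ (-θ) ≤ ((n:ℝ)+1) ^ (1-θ) - (n:ℝ) ^ (1-θ) := by
      rw [hsplit, hpow1]
      rw [hfrac] at bern
      have h2 : ((n:ℝ)+1) ^ (1-θ) * (((n:ℝ)/((n:ℝ)+1)) ^ (1-θ))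
          ≤ ((n:ℝ)+1) ^ (1-θ) * (1 - (1-θ) * (1/((n:ℝ)+1))) := by
        apply mul_le_mul_of_nonneg_left _ hposp.le
        linarith
      have h3 : ((n:ℝ)+1) ^ (1-θ) * (1 - (1-θ) * (1/((n:ℝ)+1)))
          = ((n:ℝ)+1) ^ (1-θ) - (1-θ) * (((n:ℝ)+1) ^ (1-θ) / ((n:ℝ)+1)) := by
        field_simp
      linarith
    have hodd : (2*(n:ℝ)+1) ^ (-θ) ≤ ((n:ℝ)+1) ^ (-θ) :=
      rpow_base_antitone hn1 (by linarith [Nat.cast_nonneg (α := ℝ) n]) h0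
    have : (2*(n:ℝ)+1) ^ (-θ) ≤ (((n:ℝ)+1) ^ (1-θ) - (n:ℝ) ^ (1-θ))/(1-θ) := by
      rw [le_div_iff₀ hp0]
      nlinarith [key, hodd]
    push_cast
    calc ∑ j ∈ Finset.range n, (2*(j:ℝ)+1) ^ (-θ) + (2*(n:ℝ)+1) ^ (-θ)
        ≤ (n:ℝ) ^ (1-θ)/(1-θ) + (((n:ℝ)+1) ^ (1-θ) - (n:ℝ) ^ (1-θ))/(1-θ) := by
          exact add_le_add ih this
      _ = ((n:ℝ)+1) ^ (1-θ)/(1-θ) := by ring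

end helpers

section scalehelpers

namespace BanachScale
variable (𝓑 : BanachScale)

lemma N_neg (θ : ℝ) (x : 𝓑.E) : 𝓑.N θ (-x) = 𝓑.N θ x := by
  have := 𝓑.N_smul θ (-1) x
  rwa [neg_one_smul, abs_neg, abs_one, one_mul] at this

lemma mem_sub (θ : ℝ) (x y : 𝓑.E) (hx : 𝓑.Mem θ x) (hy : 𝓑.Mem θ y) :
    𝓑.Mem θ (x - y) := by
  rw [sub_eq_add_neg]; exact 𝓑.mem_add _ _ _ hx (𝓑.mem_neg _ _ hy)

lemma N_sub_le (θ : ℝ) (x y : 𝓑.E) (hx : 𝓑.Mem θ x) (hy : 𝓑.Mem θ y) :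
    𝓑.N θ (x - y) ≤ 𝓑.N θ x + 𝓑.N θ y := by
  rw [sub_eq_add_neg]
  simpa [𝓑.N_neg] using 𝓑.N_add θ x (-y) hx (𝓑.mem_neg _ _ hy)

lemma N_sub_rev (θ : ℝ) (x y : 𝓑.E) : 𝓑.N θ (x - y) = 𝓑.N θ (y - x) := by
  rw [← 𝓑.N_neg θ (x - y), neg_sub]

lemma mem_sum (θ : ℝ) {ι : Type*} (s : Finset ι) (f : ι → 𝓑.E)
    (h : ∀ i ∈ s, 𝓑.Mem θ (f i)) : 𝓑.Mem θ (∑ i ∈ s, f i) := by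
  classical
  induction s using Finset.induction_on with
  | empty => simpa using 𝓑.mem_zero θ
  | @insert a s ha ih =>
    rw [Finset.sum_insert ha]
    exact 𝓑.mem_add _ _ _ (h a (Finset.mem_insert_self a s))
      (ih fun i hi => h i (Finset.mem_insert_of_mem hi))

lemma N_sum_le (θ : ℝ) {ι : Type*} (s : Finset ι) (f : ι → 𝓑.E)
    (h : ∀ i ∈ s, 𝓑.Mem θ (f i)) : 𝓑.N θ (∑ i ∈ s, f i) ≤ ∑ i ∈ s, 𝓑.N θ (f i) := by
  classical
  induction s using Finset.induction_on with
  | empty => simp [𝓑.N_zero]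
  | @insert a s ha ih =>
    rw [Finset.sum_insert ha, Finset.sum_insert ha]
    calc 𝓑.N θ (f a + ∑ i ∈ s, f i)
        ≤ 𝓑.N θ (f a) + 𝓑.N θ (∑ i ∈ s, f i) :=
          𝓑.N_add _ _ _ (h a (Finset.mem_insert_self a s))
            (𝓑.mem_sum θ s f fun i hi => h i (Finset.mem_insert_of_mem hi))
      _ ≤ _ := by
          have := ih fun i hi => h i (Finset.mem_insert_of_mem hi)
          linarith

end BanachScale

/-- Smoothing with exponents up to 2, by composing the semigroup with itself. -/
lemma smooth2 (𝓑 : BanachScale) (Sg : ScaleSemigroup 𝓑) (T : ℝ) (hT : 0 < T)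
    (η θ' : ℝ) (h1 : η ≤ θ') (h2 : θ' ≤ η + 2) :
    ∃ C > (0:ℝ), ∀ τ (x : 𝓑.E), 0 < τ → τ ≤ T → 𝓑.Mem η x →
      𝓑.Mem θ' (Sg.S τ x) ∧ 𝓑.N θ' (Sg.S τ x) ≤ C * τ ^ (η - θ') * 𝓑.N η x := by
  by_cases hcase : θ' ≤ η + 1
  · obtain ⟨C, hC, hS⟩ := Sg.S_smoothing η (θ' - η) T (by linarith) (by linarith) hT
    refine ⟨C, hC, fun τ x hτ hτT hx => ?_⟩
    have h := hS τ x hτ hτT hx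
    rw [show η + (θ' - η) = θ' from by ring] at h
    refine ⟨h.1, ?_⟩
    rw [show η - θ' = -(θ' - η) from by ring]
    exact h.2
  · push_neg at hcase
    obtain ⟨C1, hC1, hS1⟩ := Sg.S_smoothing η 1 T zero_le_one le_rfl hT
    obtain ⟨C2, hC2, hS2⟩ := Sg.S_smoothing (η + 1) (θ' - η - 1) T
      (by linarith) (by linarith) hT
    refine ⟨C2 * C1 * (2:ℝ) ^ (θ' - η), by positivity, fun τ x hτ hτT hx => ?_⟩
    have hτ2 : 0 < τ / 2 := by linarith
    have hτ2T : τ / 2 ≤ T := by linarith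
    have hsplit : Sg.S τ x = Sg.S (τ/2) (Sg.S (τ/2) x) := by
      rw [← Sg.S_comp (τ/2) (τ/2) hτ2.le hτ2.le x, show τ/2 + τ/2 = τ from by ring]
    have hA := hS1 (τ/2) x hτ2 hτ2T hx
    have hB := hS2 (τ/2) (Sg.S (τ/2) x) hτ2 hτ2T hA.1
    rw [show η + 1 + (θ' - η - 1) = θ' from by ring] at hB
    rw [hsplit]
    refine ⟨hB.1, ?_⟩
    have step1 : 𝓑.N θ' (Sg.S (τ/2) (Sg.S (τ/2) x))
        ≤ C2 * (τ/2) ^ (-(θ' - η - 1)) * (C1 * (τ/2) ^ (-(1:ℝ)) * 𝓑.N η x) := by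
      refine le_trans hB.2 ?_
      apply mul_le_mul_of_nonneg_left hA.2
      positivity
    refine le_trans step1 (le_of_eq ?_)
    have hhalf : (0:ℝ) < τ/2 := hτ2
    have e1 : (τ/2) ^ (-(θ' - η - 1)) * (τ/2) ^ (-(1:ℝ)) = (τ/2) ^ (η - θ') := by
      rw [← Real.rpow_add hhalf]; ring_nf
    have e2 : (τ/2) ^ (η - θ') = (2:ℝ) ^ (θ' - η) * τ ^ (η - θ') := by
      rw [div_eq_mul_inv, Real.mul_rpow hτ.le (by norm_num),
        ← Real.rpow_neg_one (2:ℝ), ← Real.rpow_mul (by norm_num : (0:ℝ) ≤ 2),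
        show (-1:ℝ) * (η - θ') = θ' - η from by ring]
      ring
    calc C2 * (τ/2) ^ (-(θ' - η - 1)) * (C1 * (τ/2) ^ (-(1:ℝ)) * 𝓑.N η x)
        = C2 * C1 * ((τ/2) ^ (-(θ' - η - 1)) * (τ/2) ^ (-(1:ℝ))) * 𝓑.N η x := by ring
      _ = C2 * C1 * ((2:ℝ) ^ (θ' - η) * τ ^ (η - θ')) * 𝓑.N η x := by rw [e1, e2]
      _ = C2 * C1 * (2:ℝ) ^ (θ' - η) * τ ^ (η - θ') * 𝓑.N η x := by ring

/-- `|x - S(h)x|_{μ-1} ≤ C h |x|_μ`. -/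
lemma holdOne (𝓑 : BanachScale) (Sg : ScaleSemigroup 𝓑) (T : ℝ) (hT : 0 < T) (μ : ℝ) :
    ∃ C > (0:ℝ), ∀ h (x : 𝓑.E), 0 < h → h ≤ T → 𝓑.Mem μ x →
      𝓑.N (μ - 1) (x - Sg.S h x) ≤ C * h * 𝓑.N μ x := by
  obtain ⟨C, hC, hS⟩ := Sg.S_holdId (μ - 1) 1 T zero_le_one le_rfl hT
  refine ⟨C, hC, fun h x hh hhT hx => ?_⟩
  have hx' : 𝓑.Mem (μ - 1 + 1) x := by rwa [sub_add_cancel]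
  have := hS h x hh hhT hx'
  rw [sub_add_cancel] at this
  rw [show x - Sg.S h x = -(Sg.S h x - x) from (neg_sub _ _).symm, 𝓑.N_neg]
  simpa [Real.rpow_one] using this

end scalehelpers

section dyadic

/-- The dyadic partition of `[0,t]` with `2^k` equal intervals. -/
noncomputable def dyadicPart (t : ℝ) (ht : 0 < t) (k : ℕ) : RPartition 0 t where
  n := 2 ^ k
  t := fun i => i * t / 2 ^ k
  n_pos := pow_pos (by norm_num) k
  strict := fun i _ => by
    have h2 : (0:ℝ) < 2 ^ k := by positivity
    have : ((i:ℝ) * t) < ((i:ℝ) + 1) * t := by nlinarith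
    push_cast
    exact div_lt_div_of_pos_right this h2
  first := by simp
  last := by
    push_cast
    field_simp

lemma dyadicPart_mesh (t : ℝ) (ht : 0 < t) (k : ℕ) :
    (dyadicPart t ht k).mesh = t / 2 ^ k := by
  unfold RPartition.mesh
  have : {r : ℝ | ∃ i : ℕ, i < (dyadicPart t ht k).n ∧
      r = (dyadicPart t ht k).t (i + 1) - (dyadicPart t ht k).t i} = {t / 2 ^ k} := by
    ext r
    simp only [Set.mem_setOf_eq, Set.mem_singleton_iff, dyadicPart]
    constructor
    · rintro ⟨i, hi, rfl⟩; push_cast; ring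
    · rintro rfl
      exact ⟨0, pow_pos (by norm_num) k, by push_cast; ring⟩
  rw [this, csSup_singleton]

end dyadic

section components

lemma scaleSupNorm_nonneg (𝓑 : BanachScale) (θ T : ℝ) (f : ℝ → 𝓑.E) (hT : 0 ≤ T) :
    0 ≤ scaleSupNorm 𝓑 θ T f := by
  unfold scaleSupNorm
  apply Real.sSup_nonneg
  rintro x ⟨t, _, _, rfl⟩
  exact 𝓑.N_nonneg _ _

lemma scaleHolderNorm2_nonneg (𝓑 : BanachScale) (θ η T : ℝ) (F : ℝ → ℝ → 𝓑.E) :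
    0 ≤ scaleHolderNorm2 𝓑 θ η T F := by
  unfold scaleHolderNorm2
  apply Real.sSup_nonneg
  rintro x ⟨s, t, hs, hst, htT, rfl⟩
  exact div_nonneg (𝓑.N_nonneg _ _) (Real.rpow_nonneg (by linarith) _)

lemma scaleHolderNorm_nonneg (𝓑 : BanachScale) (θ η T : ℝ) (f : ℝ → 𝓑.E) :
    0 ≤ scaleHolderNorm 𝓑 θ η T f := scaleHolderNorm2_nonneg _ _ _ _ _

lemma holder2_le (𝓑 : BanachScale) (θ η T : ℝ) (F : ℝ → ℝ → 𝓑.E) (C : ℝ)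
    (hC : ∀ s t : ℝ, 0 ≤ s → s < t → t ≤ T → 𝓑.N θ (F s t) ≤ C * (t-s) ^ η) :
    ∀ s t : ℝ, 0 ≤ s → s < t → t ≤ T →
      𝓑.N θ (F s t) ≤ scaleHolderNorm2 𝓑 θ η T F * (t-s) ^ η := by
  intro s t hs hst htT
  have hpos : 0 < (t-s) ^ η := Real.rpow_pos_of_pos (by linarith) η
  have hbdd : BddAbove {r : ℝ | ∃ s t : ℝ, 0 ≤ s ∧ s < t ∧ t ≤ T ∧
      r = 𝓑.N θ (F s t) / (t - s) ^ η} := by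
    refine ⟨max C 0, ?_⟩
    rintro x ⟨s', t', hs', hst', ht'T, rfl⟩
    have hpos' : (0:ℝ) < (t'-s') ^ η := Real.rpow_pos_of_pos (by linarith) η
    rw [div_le_iff₀ hpos']
    exact le_trans (hC s' t' hs' hst' ht'T)
      (mul_le_mul_of_nonneg_right (le_max_left _ _) hpos'.le)
  have hle : 𝓑.N θ (F s t) / (t-s) ^ η ≤ scaleHolderNorm2 𝓑 θ η T F :=
    le_csSup hbdd ⟨s, t, hs, hst, htT, rfl⟩
  calc 𝓑.N θ (F s t) = 𝓑.N θ (F s t) / (t-s) ^ η * (t-s) ^ η := by field_simp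
    _ ≤ _ := mul_le_mul_of_nonneg_right hle hpos.le

/-- A uniformly continuous-in-norm path has bounded sup-norm set, and the pointwise bound. -/
lemma le_scaleSupNorm (𝓑 : BanachScale) (θ T : ℝ) (hT : 0 < T) (f : ℝ → 𝓑.E)
    (hmem : ∀ t : ℝ, 0 ≤ t → t ≤ T → 𝓑.Mem θ (f t))
    (hcont : ∀ t : ℝ, 0 ≤ t → t ≤ T → ∀ ε > (0:ℝ), ∃ δ > (0:ℝ), ∀ s : ℝ, 0 ≤ s → s ≤ T →
      |s - t| < δ → 𝓑.N θ (f s - f t) < ε) :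
    ∀ t : ℝ, 0 ≤ t → t ≤ T → 𝓑.N θ (f t) ≤ scaleSupNorm 𝓑 θ T f := by
  have hcont' : ContinuousOn (fun s => 𝓑.N θ (f s)) (Set.Icc 0 T) := by
    intro t₀ ht₀
    rw [Metric.continuousWithinAt_iff]
    intro ε hε
    obtain ⟨δ, hδ, hδ'⟩ := hcont t₀ ht₀.1 ht₀.2 ε hε
    refine ⟨δ, hδ, fun {s} hs hd => ?_⟩
    have h1 := hδ' s hs.1 hs.2 (by rwa [Real.dist_eq] at hd)
    rw [Real.dist_eq]
    have hma := hmem t₀ ht₀.1 ht₀.2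
    have hmb := hmem s hs.1 hs.2
    have ha : 𝓑.N θ (f s) ≤ 𝓑.N θ (f t₀) + 𝓑.N θ (f s - f t₀) := by
      have := 𝓑.N_add θ (f t₀) (f s - f t₀) hma (𝓑.mem_sub _ _ _ hmb hma)
      simpa using this
    have hb : 𝓑.N θ (f t₀) ≤ 𝓑.N θ (f s) + 𝓑.N θ (f s - f t₀) := by
      have := 𝓑.N_add θ (f s) (f t₀ - f s) hmb (𝓑.mem_sub _ _ _ hma hmb)
      rw [𝓑.N_sub_rev θ (f t₀) (f s)] at this
      simpa using this
    rw [abs_lt]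
    constructor <;> linarith
  have hbdd : BddAbove {r : ℝ | ∃ t : ℝ, 0 ≤ t ∧ t ≤ T ∧ r = 𝓑.N θ (f t)} := by
    have h2 := isCompact_Icc.bddAbove_image (f := fun s => 𝓑.N θ (f s)) hcont'
    apply BddAbove.mono ?_ h2
    rintro x ⟨t, h0, hT', rfl⟩
    exact ⟨t, ⟨h0, hT'⟩, rfl⟩
  intro t h0 hT'
  exact le_csSup hbdd ⟨t, h0, hT', rfl⟩

end components

set_option maxHeartbeats 2000000 in
/-- For `(y,y') ∈ D^{2α}_{X,γ}` and `0 ≤ σ < α`, the rough convolution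
`z_t = ∫₀ᵗ S(t-s) y_s d𝐗_s` satisfies `‖z‖_{∞,B_{γ+σ}} ≲ T^{α-σ} ‖y,y'‖_{X,2α,γ}`;
in particular `|z_t|_{B_{γ+σ}} ≲ t^{α-σ}(|y₀|_{B_γ} + |y'₀|_{B_{γ-α}} + ‖y,y'‖_{X,2α,γ})`
for every `t ∈ (0,T]`. -/
theorem statement9 (α T γ σ : ℝ) (hα : 1/3 < α) (hα' : α < 1/2) (hT : 0 < T)
    (hσ : 0 ≤ σ) (hσα : σ < α)
    (𝓑 : BanachScale) (Sg : ScaleSemigroup 𝓑) (RP : RoughPath α T) :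
    ∃ C > (0:ℝ), ∀ y y' : ℝ → 𝓑.E, IsControlledPath 𝓑 α γ T RP.X y y' →
      ∀ z : ℝ → 𝓑.E, z 0 = 0 →
        (∀ t : ℝ, 0 < t → t ≤ T →
          IsRoughConvolution 𝓑 Sg RP.X RP.X2 y y' (γ - 2 * α) 0 t (z t)) →
        scaleSupNorm 𝓑 (γ + σ) T z ≤ C * T ^ (α - σ) * crpNorm 𝓑 α γ T RP.X y y' ∧
        ∀ t : ℝ, 0 < t → t ≤ T →
          𝓑.N (γ + σ) (z t)
            ≤ C * t ^ (α - σ) * (𝓑.N γ (y 0) + 𝓑.N (γ - α) (y' 0)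
                + crpNorm 𝓑 α γ T RP.X y y') := by
  have hα0 : (0:ℝ) < α := by linarith
  have hασ : (0:ℝ) < α - σ := by linarith
  -- rough path constants
  obtain ⟨CX₀, hCX₀⟩ := RP.holderX
  obtain ⟨CY₀, hCY₀⟩ := RP.holderX2
  set CX : ℝ := max CX₀ 0 with hCXdef
  set CX2 : ℝ := max CY₀ 0 with hCX2def
  have hCX0 : 0 ≤ CX := le_max_right _ _
  have hCX20 : 0 ≤ CX2 := le_max_right _ _
  have hCX : ∀ s u : ℝ, 0 ≤ s → s ≤ u → u ≤ T → |RP.X u - RP.X s| ≤ CX * (u - s) ^ α := by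
    intro s u hs hsu huT
    exact le_trans (hCX₀ s u hs hsu huT)
      (mul_le_mul_of_nonneg_right (le_max_left _ _) (Real.rpow_nonneg (by linarith) _))
  have hCX2 : ∀ s u : ℝ, 0 ≤ s → s ≤ u → u ≤ T → |RP.X2 s u| ≤ CX2 * (u - s) ^ (2*α) := by
    intro s u hs hsu huT
    exact le_trans (hCY₀ s u hs hsu huT)
      (mul_le_mul_of_nonneg_right (le_max_left _ _) (Real.rpow_nonneg (by linarith) _))
  -- smoothing and semigroup constants
  obtain ⟨Cs1, hCs1, hS1⟩ := smooth2 𝓑 Sg T hT (γ - 2*α) (γ + σ) (by linarith) (by linarith)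
  obtain ⟨Cs2, hCs2, hS2⟩ := smooth2 𝓑 Sg T hT (γ - α - 1) (γ + σ) (by linarith) (by linarith)
  obtain ⟨Cs3, hCs3, hS3⟩ := smooth2 𝓑 Sg T hT (γ - 1) (γ + σ) (by linarith) (by linarith)
  obtain ⟨Cs4, hCs4, hS4⟩ := smooth2 𝓑 Sg T hT γ (γ + σ) (by linarith) (by linarith)
  obtain ⟨Cs5, hCs5, hS5⟩ := smooth2 𝓑 Sg T hT (γ - α) (γ + σ) (by linarith) (by linarith)
  obtain ⟨Chy, hChy, hHy⟩ := holdOne 𝓑 Sg T hT γ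
  obtain ⟨Chy', hChy', hHy'⟩ := holdOne 𝓑 Sg T hT (γ - α)
  obtain ⟨Ce, hCe, hEmb⟩ := 𝓑.embed_bound (show γ - 2*α ≤ γ + σ by linarith)
  -- exponents
  set θs : ℝ := (1 - (α - σ) + min (2*α + σ) 1) / 2 with hθsdef
  have hmin1 : 1 - (α - σ) < min (2*α + σ) 1 := by
    apply lt_min <;> linarith
  have hθs0 : 0 ≤ θs := by
    have : (0:ℝ) < 1 - (α - σ) := by linarith
    have h2 : (0:ℝ) ≤ min (2*α + σ) 1 := le_min (by linarith) (by linarith)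
    rw [hθsdef]; linarith
  have hθs1 : θs < 1 := by
    have := min_le_right (2*α + σ) 1
    rw [hθsdef]; linarith
  have hθslow : 1 - (α - σ) < θs := by rw [hθsdef]; linarith
  have hθsle : θs ≤ 2*α + σ := by
    have := min_le_left (2*α + σ) 1
    rw [hθsdef]; linarith
  set εb : ℝ := (α - σ) - (1 - θs) with hεbdef
  have hεb : 0 < εb := by rw [hεbdef]; linarith
  set r : ℝ := (2:ℝ) ^ (-εb) with hrdef
  have hr0 : 0 < r := Real.rpow_pos_of_pos two_pos _
  have hr1 : r < 1 := Real.rpow_lt_one_of_one_lt_of_neg one_lt_two (by linarith)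
  have hgeom : ∀ K : ℕ, ∑ k ∈ Finset.range K, r ^ k ≤ 1/(1-r) := by
    intro K
    rw [le_div_iff₀ (by linarith)]
    have := geom_sum_mul r K
    have h2 : (∑ i ∈ Finset.range K, r ^ i) * (1 - r) = 1 - r ^ K := by
      have h3 : (∑ i ∈ Finset.range K, r ^ i) * (r - 1) = r ^ K - 1 := geom_sum_mul r K
      nlinarith [h3]
    rw [h2]
    nlinarith [pow_nonneg hr0.le K]
  -- constants
  set Kd : ℝ := Cs1*CX + Cs2*CX^2*Chy' + Cs3*CX*Chy + Cs1*CX2 + Cs2*CX2*Chy' + 1 with hKddef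
  have hKd0 : (0:ℝ) < Kd := by
    have h1 : 0 ≤ Cs1*CX := mul_nonneg hCs1.le hCX0
    have h2 : 0 ≤ Cs2*CX^2*Chy' := mul_nonneg (mul_nonneg hCs2.le (by positivity)) hChy'.le
    have h3 : 0 ≤ Cs3*CX*Chy := mul_nonneg (mul_nonneg hCs3.le hCX0) hChy.le
    have h4 : 0 ≤ Cs1*CX2 := mul_nonneg hCs1.le hCX20
    have h5 : 0 ≤ Cs2*CX2*Chy' := mul_nonneg (mul_nonneg hCs2.le hCX20) hChy'.le
    rw [hKddef]; linarith
  set KL : ℝ := Kd / (1-θs) * (1/(1-r)) with hKLdef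
  have h1θ : (0:ℝ) < 1 - θs := by linarith
  have h1r : (0:ℝ) < 1 - r := by linarith
  have hKL0 : 0 < KL := by
    rw [hKLdef]
    exact mul_pos (div_pos hKd0 h1θ) (div_pos one_pos h1r)
  set Kbase : ℝ := Cs4*CX + Cs5*CX2 + 1 with hKbasedef
  have hKbase0 : (0:ℝ) < Kbase := by
    have h1 : 0 ≤ Cs4*CX := mul_nonneg hCs4.le hCX0
    have h2 : 0 ≤ Cs5*CX2 := mul_nonneg hCs5.le hCX20
    rw [hKbasedef]; linarith
  refine ⟨3*(Kbase + KL) + 1, by linarith, ?_⟩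
  intro y y' hcp z hz0 hconv
  set Λ : ℝ := crpNorm 𝓑 α γ T RP.X y y' with hΛdef
  have hΛsplit : Λ = scaleSupNorm 𝓑 γ T y + scaleSupNorm 𝓑 (γ - α) T y'
      + scaleHolderNorm 𝓑 (γ - 2*α) α T y'
      + scaleHolderNorm2 𝓑 (γ - α) α T (gubRemainder 𝓑 RP.X y y')
      + scaleHolderNorm2 𝓑 (γ - 2*α) (2*α) T (gubRemainder 𝓑 RP.X y y') := rfl
  have hn1 := scaleSupNorm_nonneg 𝓑 γ T y hT.le
  have hn2 := scaleSupNorm_nonneg 𝓑 (γ - α) T y' hT.le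
  have hn3 := scaleHolderNorm_nonneg 𝓑 (γ - 2*α) α T y'
  have hn4 := scaleHolderNorm2_nonneg 𝓑 (γ - α) α T (gubRemainder 𝓑 RP.X y y')
  have hn5 := scaleHolderNorm2_nonneg 𝓑 (γ - 2*α) (2*α) T (gubRemainder 𝓑 RP.X y y')
  have hΛ0 : 0 ≤ Λ := by rw [hΛsplit]; linarith
  have hyΛ : ∀ s : ℝ, 0 ≤ s → s ≤ T → 𝓑.N γ (y s) ≤ Λ := by
    intro s h0 hsT
    have := le_scaleSupNorm 𝓑 γ T hT y hcp.mem_y hcp.cont_y s h0 hsT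
    rw [hΛsplit]; linarith
  have hy'Λ : ∀ s : ℝ, 0 ≤ s → s ≤ T → 𝓑.N (γ - α) (y' s) ≤ Λ := by
    intro s h0 hsT
    have := le_scaleSupNorm 𝓑 (γ - α) T hT y' hcp.mem_y' hcp.cont_y' s h0 hsT
    rw [hΛsplit]; linarith
  have hy'hol : ∀ s u : ℝ, 0 ≤ s → s ≤ u → u ≤ T →
      𝓑.N (γ - 2*α) (y' u - y' s) ≤ Λ * (u - s) ^ α := by
    intro s u h0 hsu huT
    rcases eq_or_lt_of_le hsu with rfl | hlt
    · rw [sub_self, 𝓑.N_zero, sub_self, Real.zero_rpow hα0.ne', mul_zero]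
    · obtain ⟨Cyh, hCyh⟩ := hcp.holder_y'
      have h2 := holder2_le 𝓑 (γ - 2*α) α T (fun a b => y' b - y' a) Cyh
        (fun a b ha hab hbT => hCyh a b ha hab.le hbT) s u h0 hlt huT
      refine le_trans h2 (mul_le_mul_of_nonneg_right ?_ (Real.rpow_nonneg (by linarith) _))
      have heq : scaleHolderNorm 𝓑 (γ - 2*α) α T y'
          = scaleHolderNorm2 𝓑 (γ - 2*α) α T (fun a b => y' b - y' a) := rfl
      rw [hΛsplit, heq]; linarith
  have hRhol : ∀ s u : ℝ, 0 ≤ s → s ≤ u → u ≤ T →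
      𝓑.N (γ - 2*α) (gubRemainder 𝓑 RP.X y y' s u) ≤ Λ * (u - s) ^ (2*α) := by
    intro s u h0 hsu huT
    rcases eq_or_lt_of_le hsu with rfl | hlt
    · have hz : gubRemainder 𝓑 RP.X y y' s s = 0 := by
        unfold gubRemainder; rw [sub_self, sub_self, zero_smul, sub_zero]
      rw [hz, 𝓑.N_zero, sub_self, Real.zero_rpow (by positivity), mul_zero]
    · obtain ⟨Crh, hCrh⟩ := hcp.rem_two_alpha
      have h2 := holder2_le 𝓑 (γ - 2*α) (2*α) T (gubRemainder 𝓑 RP.X y y') Crh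
        (fun a b ha hab hbT => hCrh a b ha hab.le hbT) s u h0 hlt huT
      refine le_trans h2 (mul_le_mul_of_nonneg_right ?_ (Real.rpow_nonneg (by linarith) _))
      rw [hΛsplit]; linarith
  have main : ∀ t : ℝ, 0 < t → t ≤ T → 𝓑.N (γ + σ) (z t)
      ≤ (Kbase + KL) * t ^ (α - σ) * (𝓑.N γ (y 0) + 𝓑.N (γ - α) (y' 0) + Λ) := by
    intro t ht htT
    have core : ∀ u h : ℝ, 0 ≤ u → 0 < h → u + 2*h ≤ t →
        𝓑.Mem (γ + σ) (Sg.S (t - u) ((RP.X (u+h) - RP.X u) • y u + RP.X2 u (u+h) • y' u)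
            + Sg.S (t - (u+h)) ((RP.X (u+2*h) - RP.X (u+h)) • y (u+h) + RP.X2 (u+h) (u+2*h) • y' (u+h))
            - Sg.S (t - u) ((RP.X (u+2*h) - RP.X u) • y u + RP.X2 u (u+2*h) • y' u)) ∧
        𝓑.N (γ + σ) (Sg.S (t - u) ((RP.X (u+h) - RP.X u) • y u + RP.X2 u (u+h) • y' u)
            + Sg.S (t - (u+h)) ((RP.X (u+2*h) - RP.X (u+h)) • y (u+h) + RP.X2 (u+h) (u+2*h) • y' (u+h))
            - Sg.S (t - u) ((RP.X (u+2*h) - RP.X u) • y u + RP.X2 u (u+2*h) • y' u))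
          ≤ Kd * Λ * ((h / (t - (u+h))) ^ θs * h ^ (α - σ)) := by
      intro u h hu hh huv
      have hm0 : (0:ℝ) ≤ u + h := by linarith
      have hvT : u + 2*h ≤ T := le_trans huv htT
      have hmT : u + h ≤ T := by linarith
      have huT : u ≤ T := by linarith
      have hhT : h ≤ T := by linarith
      have hτpos : 0 < t - (u+h) := by linarith
      have hτT : t - (u+h) ≤ T := by linarith
      have hhτ : h ≤ t - (u+h) := by linarith
      have hyu := hcp.mem_y u hu huT
      have hym := hcp.mem_y (u+h) hm0 hmT
      have hy'u := hcp.mem_y' u hu huT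
      have hy'm := hcp.mem_y' (u+h) hm0 hmT
      have hShyu : 𝓑.Mem γ (Sg.S h (y u)) := Sg.S_mem h γ _ hh.le hyu
      have hShy'u : 𝓑.Mem (γ - α) (Sg.S h (y' u)) := Sg.S_mem h _ _ hh.le hy'u
      set τ : ℝ := t - (u + h) with hτdef
      set p1 : 𝓑.E := (RP.X (u+2*h) - RP.X (u+h)) • gubRemainder 𝓑 RP.X y y' u (u+h) with hp1
      set p2 : 𝓑.E := ((RP.X (u+h) - RP.X u) * (RP.X (u+2*h) - RP.X (u+h))) • (y' u - Sg.S h (y' u)) with hp2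
      set p3 : 𝓑.E := (RP.X (u+2*h) - RP.X (u+h)) • (y u - Sg.S h (y u)) with hp3
      set p4 : 𝓑.E := RP.X2 (u+h) (u+2*h) • (y' (u+h) - y' u) with hp4
      set p5 : 𝓑.E := RP.X2 (u+h) (u+2*h) • (y' u - Sg.S h (y' u)) with hp5
      have hid : Sg.S (t - u) ((RP.X (u+h) - RP.X u) • y u + RP.X2 u (u+h) • y' u)
            + Sg.S τ ((RP.X (u+2*h) - RP.X (u+h)) • y (u+h) + RP.X2 (u+h) (u+2*h) • y' (u+h))
            - Sg.S (t - u) ((RP.X (u+2*h) - RP.X u) • y u + RP.X2 u (u+2*h) • y' u)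
          = Sg.S τ p1 + Sg.S τ p2 + Sg.S τ p3 + Sg.S τ p4 + Sg.S τ p5 := by
        have hSc : ∀ x : 𝓑.E, Sg.S (t - u) x = Sg.S τ (Sg.S h x) := by
          intro x
          rw [show t - u = τ + h from by rw [hτdef]; ring]
          exact Sg.S_comp τ h hτpos.le hh.le x
        have hchen : RP.X2 u (u+2*h) = RP.X2 u (u+h) + RP.X2 (u+h) (u+2*h)
            + (RP.X (u+h) - RP.X u) * (RP.X (u+2*h) - RP.X (u+h)) := by
          have hc := RP.chen u (u+h) (u+2*h) hu (by linarith) (by linarith) hvT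
          linarith
        rw [hp1, hp2, hp3, hp4, hp5, hSc, hSc, hchen]
        unfold gubRemainder
        simp only [map_add, map_smul, map_sub]
        module
      -- coefficient bounds
      have hXmv : |RP.X (u+2*h) - RP.X (u+h)| ≤ CX * h ^ α := by
        have h2 := hCX (u+h) (u+2*h) hm0 (by linarith) hvT
        rwa [show u+2*h - (u+h) = h from by ring] at h2
      have hXum : |RP.X (u+h) - RP.X u| ≤ CX * h ^ α := by
        have h2 := hCX u (u+h) hu (by linarith) hmT
        rwa [show u+h - u = h from by ring] at h2
      have hX2mv : |RP.X2 (u+h) (u+2*h)| ≤ CX2 * h ^ (2*α) := by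
        have h2 := hCX2 (u+h) (u+2*h) hm0 (by linarith) hvT
        rwa [show u+2*h - (u+h) = h from by ring] at h2
      have hhα : (0:ℝ) ≤ h ^ α := Real.rpow_nonneg hh.le α
      have hh2α : (0:ℝ) ≤ h ^ (2*α) := Real.rpow_nonneg hh.le _
      -- vector bounds
      have hRmem : 𝓑.Mem (γ - 2*α) (gubRemainder 𝓑 RP.X y y' u (u+h)) := by
        unfold gubRemainder
        exact 𝓑.mem_sub _ _ _ (𝓑.mem_sub _ _ _ (𝓑.mem_mono (by linarith) _ hym)
          (𝓑.mem_mono (by linarith) _ hyu)) (𝓑.mem_smul _ _ _ (𝓑.mem_mono (by linarith) _ hy'u))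
      have hRN : 𝓑.N (γ - 2*α) (gubRemainder 𝓑 RP.X y y' u (u+h)) ≤ Λ * h ^ (2*α) := by
        have h2 := hRhol u (u+h) hu (by linarith) hmT
        rwa [show u+h - u = h from by ring] at h2
      have hincmem : 𝓑.Mem (γ - 2*α) (y' (u+h) - y' u) :=
        𝓑.mem_sub _ _ _ (𝓑.mem_mono (by linarith) _ hy'm) (𝓑.mem_mono (by linarith) _ hy'u)
      have hincN : 𝓑.N (γ - 2*α) (y' (u+h) - y' u) ≤ Λ * h ^ α := by
        have h2 := hy'hol u (u+h) hu (by linarith) hmT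
        rwa [show u+h - u = h from by ring] at h2
      have hdy'mem : 𝓑.Mem (γ - α - 1) (y' u - Sg.S h (y' u)) :=
        𝓑.mem_mono (by linarith) _ (𝓑.mem_sub _ _ _ hy'u hShy'u)
      have hdy'N : 𝓑.N (γ - α - 1) (y' u - Sg.S h (y' u)) ≤ Chy' * h * Λ := by
        refine le_trans (hHy' h (y' u) hh hhT hy'u) ?_
        exact mul_le_mul_of_nonneg_left (hy'Λ u hu huT) (mul_nonneg hChy'.le hh.le)
      have hdymem : 𝓑.Mem (γ - 1) (y u - Sg.S h (y u)) :=
        𝓑.mem_mono (by linarith) _ (𝓑.mem_sub _ _ _ hyu hShyu)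
      have hdyN : 𝓑.N (γ - 1) (y u - Sg.S h (y u)) ≤ Chy * h * Λ := by
        refine le_trans (hHy h (y u) hh hhT hyu) ?_
        exact mul_le_mul_of_nonneg_left (hyΛ u hu huT) (mul_nonneg hChy.le hh.le)
      -- common reduction
      have hfrac0 : 0 < h / τ := div_pos hh hτpos
      have hfrac1 : h / τ ≤ 1 := div_le_one_of_le₀ hhτ hτpos.le
      have hB : 0 ≤ (h/τ) ^ θs * h ^ (α-σ) :=
        mul_nonneg (Real.rpow_nonneg hfrac0.le _) (Real.rpow_nonneg hh.le _)
      have hτn : (0:ℝ) ≤ τ ^ (-(2*α+σ)) := Real.rpow_nonneg hτpos.le _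
      have hτn2 : (0:ℝ) ≤ τ ^ (-(1+α+σ)) := Real.rpow_nonneg hτpos.le _
      have hτn3 : (0:ℝ) ≤ τ ^ (-(1+σ)) := Real.rpow_nonneg hτpos.le _
      have hcommon : ∀ θ Cc : ℝ, 0 ≤ Cc → θs ≤ θ → ∀ w : 𝓑.E,
          𝓑.N (γ+σ) w ≤ Cc * (τ ^ (-θ) * h ^ (θ + (α-σ))) →
          𝓑.N (γ+σ) w ≤ Cc * ((h/τ) ^ θs * h ^ (α-σ)) := by
        intro θ Cc hCc hθ w hw
        refine le_trans hw (mul_le_mul_of_nonneg_left ?_ hCc)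
        have e : τ ^ (-θ) * h ^ (θ + (α-σ)) = (h/τ) ^ θ * h ^ (α-σ) := by
          rw [Real.rpow_add hh, Real.div_rpow hh.le hτpos.le, Real.rpow_neg hτpos.le]
          ring
        rw [e]
        exact mul_le_mul_of_nonneg_right
          (Real.rpow_le_rpow_of_exponent_ge hfrac0 hfrac1 hθ)
          (Real.rpow_nonneg hh.le _)
      -- the five piece estimates
      have hsm1 := hS1 τ p1 hτpos hτT (𝓑.mem_smul _ _ _ hRmem)
      have hb1 : 𝓑.N (γ+σ) (Sg.S τ p1) ≤ Cs1*CX*Λ * ((h/τ) ^ θs * h ^ (α-σ)) := by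
        apply hcommon (2*α+σ) _ (mul_nonneg (mul_nonneg hCs1.le hCX0) hΛ0) hθsle
        have hsm := hsm1.2
        rw [show γ - 2*α - (γ+σ) = -(2*α+σ) from by ring] at hsm
        refine le_trans hsm ?_
        rw [hp1, 𝓑.N_smul]
        calc Cs1 * τ ^ (-(2*α+σ)) * (|RP.X (u+2*h) - RP.X (u+h)| * 𝓑.N (γ-2*α) (gubRemainder 𝓑 RP.X y y' u (u+h)))
            ≤ Cs1 * τ ^ (-(2*α+σ)) * ((CX * h ^ α) * (Λ * h ^ (2*α))) := by
              apply mul_le_mul_of_nonneg_left _ (mul_nonneg hCs1.le hτn)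
              exact mul_le_mul hXmv hRN (𝓑.N_nonneg _ _) (mul_nonneg hCX0 hhα)
          _ = Cs1*CX*Λ * (τ ^ (-(2*α+σ)) * h ^ ((2*α+σ) + (α-σ))) := by
              rw [show (2*α+σ) + (α-σ) = α + 2*α from by ring, Real.rpow_add hh]
              ring
      have hsm4 := hS1 τ p4 hτpos hτT (𝓑.mem_smul _ _ _ hincmem)
      have hb4 : 𝓑.N (γ+σ) (Sg.S τ p4) ≤ Cs1*CX2*Λ * ((h/τ) ^ θs * h ^ (α-σ)) := by
        apply hcommon (2*α+σ) _ (mul_nonneg (mul_nonneg hCs1.le hCX20) hΛ0) hθsle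
        have hsm := hsm4.2
        rw [show γ - 2*α - (γ+σ) = -(2*α+σ) from by ring] at hsm
        refine le_trans hsm ?_
        rw [hp4, 𝓑.N_smul]
        calc Cs1 * τ ^ (-(2*α+σ)) * (|RP.X2 (u+h) (u+2*h)| * 𝓑.N (γ-2*α) (y' (u+h) - y' u))
            ≤ Cs1 * τ ^ (-(2*α+σ)) * ((CX2 * h ^ (2*α)) * (Λ * h ^ α)) := by
              apply mul_le_mul_of_nonneg_left _ (mul_nonneg hCs1.le hτn)
              exact mul_le_mul hX2mv hincN (𝓑.N_nonneg _ _) (mul_nonneg hCX20 hh2α)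
          _ = Cs1*CX2*Λ * (τ ^ (-(2*α+σ)) * h ^ ((2*α+σ) + (α-σ))) := by
              rw [show (2*α+σ) + (α-σ) = 2*α + α from by ring, Real.rpow_add hh]
              ring
      have hsm2 := hS2 τ p2 hτpos hτT (𝓑.mem_smul _ _ _ hdy'mem)
      have hb2 : 𝓑.N (γ+σ) (Sg.S τ p2) ≤ Cs2*CX^2*Chy'*Λ * ((h/τ) ^ θs * h ^ (α-σ)) := by
        apply hcommon (1+α+σ) _
          (mul_nonneg (mul_nonneg (mul_nonneg hCs2.le (by positivity)) hChy'.le) hΛ0)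
          (by linarith)
        have hsm := hsm2.2
        rw [show γ - α - 1 - (γ+σ) = -(1+α+σ) from by ring] at hsm
        refine le_trans hsm ?_
        rw [hp2, 𝓑.N_smul, abs_mul]
        calc Cs2 * τ ^ (-(1+α+σ)) * (|RP.X (u+h) - RP.X u| * |RP.X (u+2*h) - RP.X (u+h)| * 𝓑.N (γ-α-1) (y' u - Sg.S h (y' u)))
            ≤ Cs2 * τ ^ (-(1+α+σ)) * ((CX * h ^ α) * (CX * h ^ α) * (Chy' * h * Λ)) := by
              apply mul_le_mul_of_nonneg_left _ (mul_nonneg hCs2.le hτn2)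
              apply mul_le_mul (mul_le_mul hXum hXmv (abs_nonneg _) (mul_nonneg hCX0 hhα))
                hdy'N (𝓑.N_nonneg _ _)
                (mul_nonneg (mul_nonneg hCX0 hhα) (mul_nonneg hCX0 hhα))
          _ = Cs2*CX^2*Chy'*Λ * (τ ^ (-(1+α+σ)) * h ^ ((1+α+σ) + (α-σ))) := by
              rw [show (1+α+σ) + (α-σ) = α + α + 1 from by ring,
                Real.rpow_add hh (α+α) 1, Real.rpow_add hh α α, Real.rpow_one]
              ring
      have hsm5 := hS2 τ p5 hτpos hτT (𝓑.mem_smul _ _ _ hdy'mem)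
      have hb5 : 𝓑.N (γ+σ) (Sg.S τ p5) ≤ Cs2*CX2*Chy'*Λ * ((h/τ) ^ θs * h ^ (α-σ)) := by
        apply hcommon (1+α+σ) _
          (mul_nonneg (mul_nonneg (mul_nonneg hCs2.le hCX20) hChy'.le) hΛ0)
          (by linarith)
        have hsm := hsm5.2
        rw [show γ - α - 1 - (γ+σ) = -(1+α+σ) from by ring] at hsm
        refine le_trans hsm ?_
        rw [hp5, 𝓑.N_smul]
        calc Cs2 * τ ^ (-(1+α+σ)) * (|RP.X2 (u+h) (u+2*h)| * 𝓑.N (γ-α-1) (y' u - Sg.S h (y' u)))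
            ≤ Cs2 * τ ^ (-(1+α+σ)) * ((CX2 * h ^ (2*α)) * (Chy' * h * Λ)) := by
              apply mul_le_mul_of_nonneg_left _ (mul_nonneg hCs2.le hτn2)
              exact mul_le_mul hX2mv hdy'N (𝓑.N_nonneg _ _) (mul_nonneg hCX20 hh2α)
          _ = Cs2*CX2*Chy'*Λ * (τ ^ (-(1+α+σ)) * h ^ ((1+α+σ) + (α-σ))) := by
              rw [show (1+α+σ) + (α-σ) = 2*α + 1 from by ring,
                Real.rpow_add hh (2*α) 1, Real.rpow_one]
              ring
      have hsm3 := hS3 τ p3 hτpos hτT (𝓑.mem_smul _ _ _ hdymem)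
      have hb3 : 𝓑.N (γ+σ) (Sg.S τ p3) ≤ Cs3*CX*Chy*Λ * ((h/τ) ^ θs * h ^ (α-σ)) := by
        apply hcommon (1+σ) _
          (mul_nonneg (mul_nonneg (mul_nonneg hCs3.le hCX0) hChy.le) hΛ0)
          (by linarith)
        have hsm := hsm3.2
        rw [show γ - 1 - (γ+σ) = -(1+σ) from by ring] at hsm
        refine le_trans hsm ?_
        rw [hp3, 𝓑.N_smul]
        calc Cs3 * τ ^ (-(1+σ)) * (|RP.X (u+2*h) - RP.X (u+h)| * 𝓑.N (γ-1) (y u - Sg.S h (y u)))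
            ≤ Cs3 * τ ^ (-(1+σ)) * ((CX * h ^ α) * (Chy * h * Λ)) := by
              apply mul_le_mul_of_nonneg_left _ (mul_nonneg hCs3.le hτn3)
              exact mul_le_mul hXmv hdyN (𝓑.N_nonneg _ _) (mul_nonneg hCX0 hhα)
          _ = Cs3*CX*Chy*Λ * (τ ^ (-(1+σ)) * h ^ ((1+σ) + (α-σ))) := by
              rw [show (1+σ) + (α-σ) = α + 1 from by ring,
                Real.rpow_add hh α 1, Real.rpow_one]
              ring
      -- assemble
      have m1 := hsm1.1
      have m2 := hsm2.1
      have m3 := hsm3.1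
      have m4 := hsm4.1
      have m5 := hsm5.1
      have m12 := 𝓑.mem_add _ _ _ m1 m2
      have m123 := 𝓑.mem_add _ _ _ m12 m3
      have m1234 := 𝓑.mem_add _ _ _ m123 m4
      have m12345 := 𝓑.mem_add _ _ _ m1234 m5
      constructor
      · rw [hid]; exact m12345
      · rw [hid]
        have n5 := 𝓑.N_add (γ+σ) _ _ m1234 m5
        have n4 := 𝓑.N_add (γ+σ) _ _ m123 m4
        have n3 := 𝓑.N_add (γ+σ) _ _ m12 m3
        have n2 := 𝓑.N_add (γ+σ) _ _ m1 m2
        have hKs : Cs1*CX + Cs2*CX^2*Chy' + Cs3*CX*Chy + Cs1*CX2 + Cs2*CX2*Chy' ≤ Kd := by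
          rw [hKddef]; linarith
        have hsum : 𝓑.N (γ+σ) (Sg.S τ p1 + Sg.S τ p2 + Sg.S τ p3 + Sg.S τ p4 + Sg.S τ p5)
            ≤ (Cs1*CX*Λ + Cs2*CX^2*Chy'*Λ + Cs3*CX*Chy*Λ + Cs1*CX2*Λ + Cs2*CX2*Chy'*Λ)
              * ((h/τ) ^ θs * h ^ (α-σ)) := by
          have e : (Cs1*CX*Λ + Cs2*CX^2*Chy'*Λ + Cs3*CX*Chy*Λ + Cs1*CX2*Λ + Cs2*CX2*Chy'*Λ)
              * ((h/τ) ^ θs * h ^ (α-σ))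
              = Cs1*CX*Λ * ((h/τ) ^ θs * h ^ (α-σ)) + Cs2*CX^2*Chy'*Λ * ((h/τ) ^ θs * h ^ (α-σ))
              + Cs3*CX*Chy*Λ * ((h/τ) ^ θs * h ^ (α-σ)) + Cs1*CX2*Λ * ((h/τ) ^ θs * h ^ (α-σ))
              + Cs2*CX2*Chy'*Λ * ((h/τ) ^ θs * h ^ (α-σ)) := by ring
          rw [e]
          linarith
        refine le_trans hsum ?_
        calc (Cs1*CX*Λ + Cs2*CX^2*Chy'*Λ + Cs3*CX*Chy*Λ + Cs1*CX2*Λ + Cs2*CX2*Chy'*Λ)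
              * ((h/τ) ^ θs * h ^ (α-σ))
            = ((Cs1*CX + Cs2*CX^2*Chy' + Cs3*CX*Chy + Cs1*CX2 + Cs2*CX2*Chy')*Λ)
              * ((h/τ) ^ θs * h ^ (α-σ)) := by ring
          _ ≤ (Kd*Λ) * ((h/τ) ^ θs * h ^ (α-σ)) :=
              mul_le_mul_of_nonneg_right (mul_le_mul_of_nonneg_right hKs hΛ0) hB
          _ = Kd*Λ*((h/τ) ^ θs * h ^ (α-σ)) := by ring
    -- the dyadic Riemann sums
    set SS : ℕ → 𝓑.E := fun k => ∑ i ∈ Finset.range (2^k),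
      Sg.S (t - (i:ℝ)*t/2^k) ((RP.X (((i:ℝ)+1)*t/2^k) - RP.X ((i:ℝ)*t/2^k)) • y ((i:ℝ)*t/2^k)
        + RP.X2 ((i:ℝ)*t/2^k) (((i:ℝ)+1)*t/2^k) • y' ((i:ℝ)*t/2^k)) with hSSdef
    have hSSconv : ∀ k : ℕ, convRiemannSum 𝓑 Sg RP.X RP.X2 y y' (dyadicPart t ht k) = SS k := by
      intro k
      rw [hSSdef]
      simp only [convRiemannSum, dyadicPart]
      apply Finset.sum_congr rfl
      intro i _
      push_cast
      ring_nf
    have htermmem : ∀ a b : ℝ, 0 ≤ a → a < b → b ≤ t →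
        𝓑.Mem (γ+σ) (Sg.S (t - a) ((RP.X b - RP.X a) • y a + RP.X2 a b • y' a)) := by
      intro a b ha hab hbt
      have haT : a ≤ T := by linarith
      exact (hS5 (t - a) _ (by linarith) (by linarith)
        (𝓑.mem_add _ _ _ (𝓑.mem_smul _ _ _ (𝓑.mem_mono (by linarith) _ (hcp.mem_y a ha haT)))
          (𝓑.mem_smul _ _ _ (hcp.mem_y' a ha haT)))).1
    have hSSmem : ∀ k, 𝓑.Mem (γ+σ) (SS k) := by
      intro k
      rw [hSSdef]
      apply 𝓑.mem_sum
      intro i hi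
      rw [Finset.mem_range] at hi
      have h2 : (0:ℝ) < 2^k := by positivity
      have hi1 : ((i:ℝ)+1) ≤ 2^k := by
        have : (i:ℝ) + 1 ≤ ((2^k : ℕ) : ℝ) := by exact_mod_cast hi
        rwa [Nat.cast_pow, Nat.cast_ofNat] at this
      apply htermmem
      · positivity
      · exact div_lt_div_of_pos_right (mul_lt_mul_of_pos_right (lt_add_one _) ht) h2
      · rw [div_le_iff₀ h2]
        calc ((i:ℝ)+1) * t ≤ 2^k * t := mul_le_mul_of_nonneg_right hi1 ht.le
          _ = t * 2^k := mul_comm _ _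
    have hlevel : ∀ k : ℕ, 𝓑.N (γ+σ) (SS (k+1) - SS k)
        ≤ Kd * Λ / (1-θs) * (t^(α-σ) * r^k) := by
      intro k
      set h : ℝ := t / 2^(k+1) with hhdef
      have h2k : (0:ℝ) < 2^k := by positivity
      have h2k1 : (0:ℝ) < 2^(k+1) := by positivity
      have hh : 0 < h := by rw [hhdef]; positivity
      have hth : t = 2^(k+1) * h := by rw [hhdef]; field_simp
      have hcast : ∀ m : ℕ, ((2^m : ℕ) : ℝ) = (2:ℝ)^m := by
        intro m; push_cast; ring
      have hdiff : SS (k+1) - SS k = ∑ i ∈ Finset.range (2^k),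
          (Sg.S (t - 2*(i:ℝ)*h) ((RP.X (2*(i:ℝ)*h + h) - RP.X (2*(i:ℝ)*h)) • y (2*(i:ℝ)*h)
              + RP.X2 (2*(i:ℝ)*h) (2*(i:ℝ)*h + h) • y' (2*(i:ℝ)*h))
            + Sg.S (t - (2*(i:ℝ)*h + h)) ((RP.X (2*(i:ℝ)*h + 2*h) - RP.X (2*(i:ℝ)*h + h)) • y (2*(i:ℝ)*h + h)
              + RP.X2 (2*(i:ℝ)*h + h) (2*(i:ℝ)*h + 2*h) • y' (2*(i:ℝ)*h + h))
            - Sg.S (t - 2*(i:ℝ)*h) ((RP.X (2*(i:ℝ)*h + 2*h) - RP.X (2*(i:ℝ)*h)) • y (2*(i:ℝ)*h)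
              + RP.X2 (2*(i:ℝ)*h) (2*(i:ℝ)*h + 2*h) • y' (2*(i:ℝ)*h))) := by
        rw [hSSdef]
        simp only []
        rw [show (2:ℕ)^(k+1) = 2*2^k from by ring, sum_range_double, ← Finset.sum_sub_distrib]
        apply Finset.sum_congr rfl
        intro i _
        have e0 : ((2*i : ℕ) : ℝ) * t / 2^(k+1) = 2*(i:ℝ)*h := by
          push_cast; rw [hhdef]; ring
        have e1 : (((2*i : ℕ) : ℝ) + 1) * t / 2^(k+1) = 2*(i:ℝ)*h + h := by
          push_cast; rw [hhdef]; ring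
        have e2 : ((2*i + 1 : ℕ) : ℝ) * t / 2^(k+1) = 2*(i:ℝ)*h + h := by
          push_cast; rw [hhdef]; ring
        have e3 : (((2*i + 1 : ℕ) : ℝ) + 1) * t / 2^(k+1) = 2*(i:ℝ)*h + 2*h := by
          push_cast; rw [hhdef]; ring
        have e4 : ((i : ℕ) : ℝ) * t / 2^k = 2*(i:ℝ)*h := by
          push_cast; rw [hhdef]; field_simp; ring
        have e5 : (((i : ℕ) : ℝ) + 1) * t / 2^k = 2*(i:ℝ)*h + 2*h := by
          push_cast; rw [hhdef]; field_simp; ring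
        rw [e0, e1, e2, e3, e4, e5]
      have hcore : ∀ i ∈ Finset.range (2^k), 0 ≤ 2*(i:ℝ)*h ∧ 2*(i:ℝ)*h + 2*h ≤ t := by
        intro i hi
        rw [Finset.mem_range] at hi
        have hi1 : ((i:ℝ)+1) ≤ 2^k := by
          have : (i:ℝ) + 1 ≤ ((2^k : ℕ) : ℝ) := by exact_mod_cast hi
          rwa [hcast] at this
        constructor
        · positivity
        · rw [hth, show ((2:ℝ)^(k+1)) = 2*2^k from by ring]
          have := mul_le_mul_of_nonneg_right hi1 hh.le
          nlinarith only [this, hh.le, hi1, h2k]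
      have hsumb : ∑ j ∈ Finset.range (2^k), (h/(t - (2*(j:ℝ)*h + h)))^θs
          ≤ ((2^k : ℕ) : ℝ)^(1-θs)/(1-θs) := by
        have hre := (Finset.sum_range_reflect (fun i => (h/(t - (2*(i:ℝ)*h + h)))^θs) (2^k)).symm
        rw [hre]
        refine le_trans (Finset.sum_le_sum ?_) (sum_odd_pow_bound hθs0 hθs1 (2^k))
        intro j hj
        rw [Finset.mem_range] at hj
        have h1j : 1 + j ≤ 2^k := by omega
        have hjc : ((2^k - 1 - j : ℕ) : ℝ) = (2:ℝ)^k - 1 - (j:ℝ) := by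
          rw [Nat.sub_sub, Nat.cast_sub h1j]
          push_cast; ring
        have hnode : t - (2*((2^k - 1 - j : ℕ) : ℝ)*h + h) = (2*(j:ℝ)+1)*h := by
          rw [hjc, hth]; ring
        have hjpos : (0:ℝ) < 2*(j:ℝ)+1 := by positivity
        rw [hnode, show h/((2*(j:ℝ)+1)*h) = (2*(j:ℝ)+1)⁻¹ from by
            rw [mul_comm, ← div_div, div_self hh.ne', one_div],
          ← Real.rpow_neg_one (2*(j:ℝ)+1), ← Real.rpow_mul hjpos.le,
          show (-1:ℝ)*θs = -θs from by ring]
      have hkey : h^(α-σ) * ((2^k : ℕ) : ℝ)^(1-θs) ≤ t^(α-σ) * r^k := by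
        rw [hcast, hhdef, Real.div_rpow ht.le h2k1.le]
        have hb1 : ((2:ℝ)^k)^(α-σ) ≤ ((2:ℝ)^(k+1))^(α-σ) :=
          Real.rpow_le_rpow h2k.le
            (by rw [pow_succ]; exact le_mul_of_one_le_right h2k.le one_le_two) hασ.le
        have hb2 : t^(α-σ)/((2:ℝ)^(k+1))^(α-σ) ≤ t^(α-σ)/((2:ℝ)^k)^(α-σ) :=
          div_le_div_of_nonneg_left (Real.rpow_nonneg ht.le _)
            (Real.rpow_pos_of_pos h2k _) hb1
        calc t^(α-σ)/((2:ℝ)^(k+1))^(α-σ) * ((2:ℝ)^k)^(1-θs)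
            ≤ t^(α-σ)/((2:ℝ)^k)^(α-σ) * ((2:ℝ)^k)^(1-θs) :=
              mul_le_mul_of_nonneg_right hb2 (Real.rpow_nonneg h2k.le _)
          _ = t^(α-σ) * (((2:ℝ)^k)^(-(α-σ)) * ((2:ℝ)^k)^(1-θs)) := by
              rw [div_eq_mul_inv, ← Real.rpow_neg h2k.le]; ring
          _ = t^(α-σ) * r^k := by
              rw [← Real.rpow_add h2k, hrdef,
                show -(α-σ) + (1-θs) = -εb from by rw [hεbdef]; ring,
                ← Real.rpow_natCast (2:ℝ) k, ← Real.rpow_mul (by norm_num : (0:ℝ) ≤ 2),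
                mul_comm ((k:ℕ):ℝ) (-εb), Real.rpow_mul (by norm_num : (0:ℝ) ≤ 2),
                Real.rpow_natCast]
      have hKdΛ : 0 ≤ Kd * Λ := mul_nonneg hKd0.le hΛ0
      rw [hdiff]
      calc 𝓑.N (γ+σ) (∑ i ∈ Finset.range (2^k), _)
          ≤ ∑ i ∈ Finset.range (2^k), 𝓑.N (γ+σ) _ := by
            apply 𝓑.N_sum_le
            intro i hi
            exact (core (2*(i:ℝ)*h) h (hcore i hi).1 hh (hcore i hi).2).1
        _ ≤ ∑ i ∈ Finset.range (2^k), Kd * Λ * ((h/(t - (2*(i:ℝ)*h + h)))^θs * h^(α-σ)) := by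
            apply Finset.sum_le_sum
            intro i hi
            exact (core (2*(i:ℝ)*h) h (hcore i hi).1 hh (hcore i hi).2).2
        _ = Kd * Λ * h^(α-σ) * ∑ i ∈ Finset.range (2^k), (h/(t - (2*(i:ℝ)*h + h)))^θs := by
            rw [Finset.mul_sum]
            apply Finset.sum_congr rfl
            intro i _
            ring
        _ ≤ Kd * Λ * h^(α-σ) * (((2^k : ℕ) : ℝ)^(1-θs)/(1-θs)) := by
            apply mul_le_mul_of_nonneg_left hsumb
            exact mul_nonneg hKdΛ (Real.rpow_nonneg hh.le _)
        _ = Kd * Λ / (1-θs) * (h^(α-σ) * ((2^k : ℕ) : ℝ)^(1-θs)) := by ring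
        _ ≤ Kd * Λ / (1-θs) * (t^(α-σ) * r^k) := by
            apply mul_le_mul_of_nonneg_left hkey
            exact div_nonneg hKdΛ h1θ.le
    -- base level bound
    have hny0 : (0:ℝ) ≤ 𝓑.N γ (y 0) := 𝓑.N_nonneg _ _
    have hny'0 : (0:ℝ) ≤ 𝓑.N (γ-α) (y' 0) := 𝓑.N_nonneg _ _
    have htpow : (0:ℝ) ≤ t^(α-σ) := Real.rpow_nonneg ht.le _
    have hbase : 𝓑.N (γ+σ) (SS 0) ≤ Kbase * t^(α-σ) * (𝓑.N γ (y 0) + 𝓑.N (γ-α) (y' 0)) := by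
      have hSS0 : SS 0 = Sg.S t ((RP.X t - RP.X 0) • y 0 + RP.X2 0 t • y' 0) := by
        rw [hSSdef]
        norm_num
      have hm1 : 𝓑.Mem γ ((RP.X t - RP.X 0) • y 0) := 𝓑.mem_smul _ _ _ (hcp.mem_y 0 le_rfl hT.le)
      have hm2 : 𝓑.Mem (γ-α) (RP.X2 0 t • y' 0) := 𝓑.mem_smul _ _ _ (hcp.mem_y' 0 le_rfl hT.le)
      have hs1 := hS4 t ((RP.X t - RP.X 0) • y 0) ht htT hm1
      have hs2 := hS5 t (RP.X2 0 t • y' 0) ht htT hm2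
      have hXb : |RP.X t - RP.X 0| ≤ CX * t^α := by
        have h2 := hCX 0 t le_rfl ht.le htT
        rwa [sub_zero] at h2
      have hX2b : |RP.X2 0 t| ≤ CX2 * t^(2*α) := by
        have h2 := hCX2 0 t le_rfl ht.le htT
        rwa [sub_zero] at h2
      have e1 : 𝓑.N (γ+σ) (Sg.S t ((RP.X t - RP.X 0) • y 0))
          ≤ Cs4*CX*t^(α-σ) * 𝓑.N γ (y 0) := by
        refine le_trans hs1.2 ?_
        rw [show γ - (γ+σ) = -σ from by ring, 𝓑.N_smul]
        calc Cs4 * t^(-σ) * (|RP.X t - RP.X 0| * 𝓑.N γ (y 0))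
            ≤ Cs4 * t^(-σ) * ((CX * t^α) * 𝓑.N γ (y 0)) := by
              apply mul_le_mul_of_nonneg_left _ (mul_nonneg hCs4.le (Real.rpow_nonneg ht.le _))
              exact mul_le_mul_of_nonneg_right hXb hny0
          _ = Cs4*CX*(t^(-σ) * t^α) * 𝓑.N γ (y 0) := by ring
          _ = Cs4*CX*t^(α-σ) * 𝓑.N γ (y 0) := by
              rw [← Real.rpow_add ht, show -σ+α = α-σ from by ring]
      have e2 : 𝓑.N (γ+σ) (Sg.S t (RP.X2 0 t • y' 0))
          ≤ Cs5*CX2*t^(α-σ) * 𝓑.N (γ-α) (y' 0) := by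
        refine le_trans hs2.2 ?_
        rw [show γ - α - (γ+σ) = -(α+σ) from by ring, 𝓑.N_smul]
        calc Cs5 * t^(-(α+σ)) * (|RP.X2 0 t| * 𝓑.N (γ-α) (y' 0))
            ≤ Cs5 * t^(-(α+σ)) * ((CX2 * t^(2*α)) * 𝓑.N (γ-α) (y' 0)) := by
              apply mul_le_mul_of_nonneg_left _ (mul_nonneg hCs5.le (Real.rpow_nonneg ht.le _))
              exact mul_le_mul_of_nonneg_right hX2b hny'0
          _ = Cs5*CX2*(t^(-(α+σ)) * t^(2*α)) * 𝓑.N (γ-α) (y' 0) := by ring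
          _ = Cs5*CX2*t^(α-σ) * 𝓑.N (γ-α) (y' 0) := by
              rw [← Real.rpow_add ht, show -(α+σ)+2*α = α-σ from by ring]
      rw [hSS0, map_add]
      refine le_trans (𝓑.N_add _ _ _ (hs1.1) (hs2.1)) ?_
      have hfin := add_le_add e1 e2
      refine le_trans hfin ?_
      have q1 : (0:ℝ) ≤ t^(α-σ)*(Cs4*CX*𝓑.N (γ-α) (y' 0)) :=
        mul_nonneg htpow (mul_nonneg (mul_nonneg hCs4.le hCX0) hny'0)
      have q2 : (0:ℝ) ≤ t^(α-σ)*(Cs5*CX2*𝓑.N γ (y 0)) :=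
        mul_nonneg htpow (mul_nonneg (mul_nonneg hCs5.le hCX20) hny0)
      have q3 : (0:ℝ) ≤ t^(α-σ)*𝓑.N γ (y 0) := mul_nonneg htpow hny0
      have q4 : (0:ℝ) ≤ t^(α-σ)*𝓑.N (γ-α) (y' 0) := mul_nonneg htpow hny'0
      have e : Kbase * t^(α-σ) * (𝓑.N γ (y 0) + 𝓑.N (γ-α) (y' 0))
          - (Cs4*CX*t^(α-σ) * 𝓑.N γ (y 0) + Cs5*CX2*t^(α-σ) * 𝓑.N (γ-α) (y' 0))
          = t^(α-σ)*(Cs4*CX*𝓑.N (γ-α) (y' 0)) + t^(α-σ)*(Cs5*CX2*𝓑.N γ (y 0))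
            + t^(α-σ)*𝓑.N γ (y 0) + t^(α-σ)*𝓑.N (γ-α) (y' 0) := by
        rw [hKbasedef]; ring
      linarith only [q1, q2, q3, q4, e]
    -- uniform bound on the dyadic sums
    have hSSbound : ∀ K : ℕ, 𝓑.N (γ+σ) (SS K)
        ≤ (Kbase + KL) * t^(α-σ) * (𝓑.N γ (y 0) + 𝓑.N (γ-α) (y' 0) + Λ) := by
      intro K
      have hd : 𝓑.N (γ+σ) (SS K - SS 0) ≤ KL * Λ * t^(α-σ) := by
        have htel : SS K - SS 0 = ∑ k ∈ Finset.range K, (SS (k+1) - SS k) :=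
          (Finset.sum_range_sub SS K).symm
        rw [htel]
        calc 𝓑.N (γ+σ) (∑ k ∈ Finset.range K, (SS (k+1) - SS k))
            ≤ ∑ k ∈ Finset.range K, 𝓑.N (γ+σ) (SS (k+1) - SS k) :=
              𝓑.N_sum_le _ _ _ (fun k _ => 𝓑.mem_sub _ _ _ (hSSmem _) (hSSmem _))
          _ ≤ ∑ k ∈ Finset.range K, Kd * Λ / (1-θs) * (t^(α-σ) * r^k) :=
              Finset.sum_le_sum (fun k _ => hlevel k)
          _ = Kd * Λ / (1-θs) * t^(α-σ) * ∑ k ∈ Finset.range K, r^k := by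
              rw [Finset.mul_sum]
              apply Finset.sum_congr rfl
              intros; ring
          _ ≤ Kd * Λ / (1-θs) * t^(α-σ) * (1/(1-r)) := by
              apply mul_le_mul_of_nonneg_left (hgeom K)
              exact mul_nonneg (div_nonneg (mul_nonneg hKd0.le hΛ0) h1θ.le) htpow
          _ = KL * Λ * t^(α-σ) := by rw [hKLdef]; ring
      have hdecomp : SS K = SS 0 + (SS K - SS 0) := by abel
      rw [hdecomp]
      refine le_trans (𝓑.N_add _ _ _ (hSSmem 0)
        (𝓑.mem_sub _ _ _ (hSSmem K) (hSSmem 0))) ?_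
      have q1 : (0:ℝ) ≤ t^(α-σ)*(Kbase*Λ) := mul_nonneg htpow (mul_nonneg hKbase0.le hΛ0)
      have q2 : (0:ℝ) ≤ t^(α-σ)*(KL*(𝓑.N γ (y 0) + 𝓑.N (γ-α) (y' 0))) :=
        mul_nonneg htpow (mul_nonneg hKL0.le (add_nonneg hny0 hny'0))
      have e : (Kbase + KL) * t^(α-σ) * (𝓑.N γ (y 0) + 𝓑.N (γ-α) (y' 0) + Λ)
          - (Kbase * t^(α-σ) * (𝓑.N γ (y 0) + 𝓑.N (γ-α) (y' 0)) + KL * Λ * t^(α-σ))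
          = t^(α-σ)*(Kbase*Λ) + t^(α-σ)*(KL*(𝓑.N γ (y 0) + 𝓑.N (γ-α) (y' 0))) := by ring
      linarith only [hbase, hd, q1, q2, e]
    -- Cauchy property
    have hIco : ∀ m n : ℕ, n ≤ m → 𝓑.N (γ+σ) (SS m - SS n)
        ≤ Kd * Λ / (1-θs) * t^(α-σ) * (1/(1-r)) * r^n := by
      intro m n hnm
      have htel : SS m - SS n = ∑ k ∈ Finset.Ico n m, (SS (k+1) - SS k) := by
        rw [Finset.sum_Ico_eq_sub _ hnm, Finset.sum_range_sub, Finset.sum_range_sub]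
        abel
      have hgeo2 : ∑ k ∈ Finset.Ico n m, r^k ≤ r^n * (1/(1-r)) := by
        rw [Finset.sum_Ico_eq_sum_range]
        calc ∑ i ∈ Finset.range (m-n), r^(n+i)
            = r^n * ∑ i ∈ Finset.range (m-n), r^i := by
              rw [Finset.mul_sum]
              apply Finset.sum_congr rfl
              intros; rw [pow_add]
          _ ≤ r^n * (1/(1-r)) := mul_le_mul_of_nonneg_left (hgeom _) (pow_nonneg hr0.le n)
      rw [htel]
      calc 𝓑.N (γ+σ) (∑ k ∈ Finset.Ico n m, (SS (k+1) - SS k))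
          ≤ ∑ k ∈ Finset.Ico n m, 𝓑.N (γ+σ) (SS (k+1) - SS k) :=
            𝓑.N_sum_le _ _ _ (fun k _ => 𝓑.mem_sub _ _ _ (hSSmem _) (hSSmem _))
        _ ≤ ∑ k ∈ Finset.Ico n m, Kd * Λ / (1-θs) * (t^(α-σ) * r^k) :=
            Finset.sum_le_sum (fun k _ => hlevel k)
        _ = Kd * Λ / (1-θs) * t^(α-σ) * ∑ k ∈ Finset.Ico n m, r^k := by
            rw [Finset.mul_sum]
            apply Finset.sum_congr rfl
            intros; ring
        _ ≤ Kd * Λ / (1-θs) * t^(α-σ) * (r^n * (1/(1-r))) := by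
            apply mul_le_mul_of_nonneg_left hgeo2
            exact mul_nonneg (div_nonneg (mul_nonneg hKd0.le hΛ0) h1θ.le) htpow
        _ = Kd * Λ / (1-θs) * t^(α-σ) * (1/(1-r)) * r^n := by ring
    have hcauchy : ∀ ε > (0:ℝ), ∃ M : ℕ, ∀ m ≥ M, ∀ n ≥ M,
        𝓑.N (γ+σ) (SS m - SS n) < ε := by
      intro ε hε
      set B2 : ℝ := Kd * Λ / (1-θs) * t^(α-σ) * (1/(1-r)) + 1 with hB2def
      have hB2a : (0:ℝ) ≤ Kd * Λ / (1-θs) * t^(α-σ) * (1/(1-r)) :=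
        mul_nonneg (mul_nonneg (div_nonneg (mul_nonneg hKd0.le hΛ0) h1θ.le) htpow)
          (div_nonneg zero_le_one h1r.le)
      have hB2pos : 0 < B2 := by rw [hB2def]; linarith
      obtain ⟨M, hM⟩ := exists_pow_lt_of_lt_one (div_pos hε hB2pos) hr1
      refine ⟨M, fun m hm n hn => ?_⟩
      have key : ∀ a b : ℕ, M ≤ a → a ≤ b → 𝓑.N (γ+σ) (SS b - SS a) < ε := by
        intro a b hMa hab
        have h2 : r^a ≤ r^M := pow_le_pow_of_le_one hr0.le hr1.le hMa
        calc 𝓑.N (γ+σ) (SS b - SS a)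
            ≤ Kd * Λ / (1-θs) * t^(α-σ) * (1/(1-r)) * r^a := hIco b a hab
          _ ≤ B2 * r^a := by
              apply mul_le_mul_of_nonneg_right _ (pow_nonneg hr0.le a)
              rw [hB2def]; linarith
          _ ≤ B2 * r^M := mul_le_mul_of_nonneg_left h2 hB2pos.le
          _ < B2 * (ε/B2) := mul_lt_mul_of_pos_left hM hB2pos
          _ = ε := by field_simp
      rcases le_total n m with hnm | hmn
      · exact key n m hn hnm
      · rw [𝓑.N_sub_rev]
        exact key m n hm hmn
    obtain ⟨zlim, hzlimmem, hzlim⟩ := 𝓑.complete (γ+σ) SS hSSmem hcauchy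
    -- identify the limit with z t
    have hzt : z t = zlim := by
      have hdiffmem : 𝓑.Mem (γ-2*α) (z t - zlim) :=
        𝓑.mem_sub _ _ _ (hconv t ht htT).1 (𝓑.mem_mono (by linarith) _ hzlimmem)
      have key : ∀ ε > (0:ℝ), 𝓑.N (γ-2*α) (z t - zlim) ≤ ε := by
        intro ε hε
        obtain ⟨δ, hδ, hδ'⟩ := (hconv t ht htT).2 (ε/2) (by linarith)
        obtain ⟨k1, hk1⟩ := exists_pow_lt_of_lt_one (div_pos hδ ht)
          (show (1/2:ℝ) < 1 from by norm_num)
        obtain ⟨M, hM⟩ := hzlim (ε/(2*Ce)) (div_pos hε (by linarith))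
        have hmesh : (dyadicPart t ht (max k1 M)).mesh < δ := by
          rw [dyadicPart_mesh]
          have h2pos : (0:ℝ) < 2^k1 := by positivity
          have h4 : (1/2:ℝ)^k1 * t < δ := (lt_div_iff₀ ht).mp hk1
          have h5 : t/(2:ℝ)^k1 = (1/2:ℝ)^k1 * t := by
            rw [one_div, inv_pow]; ring
          have h6 : (2:ℝ)^k1 ≤ 2^(max k1 M) :=
            pow_le_pow_right₀ one_le_two (le_max_left _ _)
          calc t/2^(max k1 M) ≤ t/2^k1 :=
                div_le_div_of_nonneg_left ht.le h2pos h6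
            _ < δ := by rw [h5]; exact h4
        have h1 : 𝓑.N (γ-2*α) (SS (max k1 M) - z t) ≤ ε/2 := by
          have h2 := hδ' (dyadicPart t ht (max k1 M)) hmesh
          rwa [hSSconv (max k1 M)] at h2
        have h2 : 𝓑.N (γ-2*α) (SS (max k1 M) - zlim) ≤ ε/2 := by
          have hlt := hM (max k1 M) (le_max_right _ _)
          calc 𝓑.N (γ-2*α) (SS (max k1 M) - zlim)
              ≤ Ce * 𝓑.N (γ+σ) (SS (max k1 M) - zlim) :=
                hEmb _ (𝓑.mem_sub _ _ _ (hSSmem _) hzlimmem)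
            _ ≤ Ce * (ε/(2*Ce)) := mul_le_mul_of_nonneg_left hlt.le hCe.le
            _ = ε/2 := by field_simp
        have hsplitz : z t - zlim = -(SS (max k1 M) - z t) + (SS (max k1 M) - zlim) := by
          abel
        rw [hsplitz]
        have hmza : 𝓑.Mem (γ-2*α) (SS (max k1 M) - z t) :=
          𝓑.mem_sub _ _ _ (𝓑.mem_mono (by linarith) _ (hSSmem _)) (hconv t ht htT).1
        have hmzb : 𝓑.Mem (γ-2*α) (SS (max k1 M) - zlim) :=
          𝓑.mem_sub _ _ _ (𝓑.mem_mono (by linarith) _ (hSSmem _))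
            (𝓑.mem_mono (by linarith) _ hzlimmem)
        refine le_trans (𝓑.N_add _ _ _ (𝓑.mem_neg _ _ hmza) hmzb) ?_
        rw [𝓑.N_neg]
        linarith
      have hle0 : 𝓑.N (γ-2*α) (z t - zlim) ≤ 0 :=
        le_of_forall_pos_le_add (fun ε hε => by simpa using key ε hε)
      exact sub_eq_zero.mp (𝓑.N_eq_zero _ _ hdiffmem
        (le_antisymm hle0 (𝓑.N_nonneg _ _)))
    rw [hzt]
    have hfin : ∀ ε > (0:ℝ), 𝓑.N (γ+σ) zlim
        ≤ (Kbase + KL) * t^(α-σ) * (𝓑.N γ (y 0) + 𝓑.N (γ-α) (y' 0) + Λ) + ε := by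
      intro ε hε
      obtain ⟨M, hM⟩ := hzlim ε hε
      have h1 := hM M le_rfl
      have hzdecomp : zlim = SS M + -(SS M - zlim) := by abel
      rw [hzdecomp]
      refine le_trans (𝓑.N_add _ _ _ (hSSmem M)
        (𝓑.mem_neg _ _ (𝓑.mem_sub _ _ _ (hSSmem M) hzlimmem))) ?_
      rw [𝓑.N_neg]
      have h3 := hSSbound M
      linarith
    exact le_of_forall_pos_le_add hfin
  -- the two conclusions
  constructor
  · unfold scaleSupNorm
    apply Real.sSup_le
    · rintro x ⟨s, hs0, hsT, rfl⟩
      rcases eq_or_lt_of_le hs0 with h0 | h0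
      · rw [← h0, hz0, 𝓑.N_zero]
        exact mul_nonneg (mul_nonneg (by linarith) (Real.rpow_nonneg hT.le _)) hΛ0
      · have hmain := main s h0 hsT
        have hy0 : 𝓑.N γ (y 0) ≤ Λ := hyΛ 0 le_rfl hT.le
        have hy'0 : 𝓑.N (γ-α) (y' 0) ≤ Λ := hy'Λ 0 le_rfl hT.le
        have hsP : (0:ℝ) ≤ s^(α-σ) := Real.rpow_nonneg hs0 _
        have hsT' : s^(α-σ) ≤ T^(α-σ) := Real.rpow_le_rpow hs0 hsT hασ.le
        have hKsum : (0:ℝ) < Kbase + KL := by linarith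
        calc 𝓑.N (γ+σ) (z s)
            ≤ (Kbase+KL) * s^(α-σ) * (𝓑.N γ (y 0) + 𝓑.N (γ-α) (y' 0) + Λ) := hmain
          _ ≤ (Kbase+KL) * s^(α-σ) * (3*Λ) := by
              apply mul_le_mul_of_nonneg_left (by linarith) (mul_nonneg hKsum.le hsP)
          _ ≤ (Kbase+KL) * T^(α-σ) * (3*Λ) := by
              apply mul_le_mul_of_nonneg_right
                (mul_le_mul_of_nonneg_left hsT' hKsum.le) (by linarith)
          _ = (3*(Kbase+KL)) * T^(α-σ) * Λ := by ring
          _ ≤ (3*(Kbase+KL)+1) * T^(α-σ) * Λ := by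
              apply mul_le_mul_of_nonneg_right _ hΛ0
              exact mul_le_mul_of_nonneg_right (by linarith) (Real.rpow_nonneg hT.le _)
    · exact mul_nonneg (mul_nonneg (by linarith) (Real.rpow_nonneg hT.le _)) hΛ0
  · intro t ht htT
    have hmain := main t ht htT
    have htP : (0:ℝ) ≤ t^(α-σ) := Real.rpow_nonneg ht.le _
    have hsumN : (0:ℝ) ≤ 𝓑.N γ (y 0) + 𝓑.N (γ-α) (y' 0) + Λ := by
      have h1 := 𝓑.N_nonneg γ (y 0)
      have h2 := 𝓑.N_nonneg (γ-α) (y' 0)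
      linarith
    refine le_trans hmain ?_
    apply mul_le_mul_of_nonneg_right _ hsumN
    exact mul_le_mul_of_nonneg_right (by linarith) htP
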